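/- arXiv:1603.03002 — 6 statements merged into one kernel-verified Lean document; each statement's English description precedes it below -/
import Mathlib

section
/- Let F be the free group of rank m ≥ 2, let x ∈ Σ, and let M = {1} ∪ (C[x] ∖ C(x^{-1},x)) (i.e. the identity together with all elements whose reduced word ends with x and does not begin with x^{-1}). Then for all real t ∈ (−1,1): g_M(t) = 1 + t(2m−t)/(4m²(1−t)) + t²((2m−1)²+t)/(4m²((2m−1)²−t²)). -/
open Filter Set

noncomputable section

/-- The free group of rank `m`. -/
abbrev FG (m : ℕ) := FreeGroup (Fin m)

/-- The length of the reduced word of `g`. -/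
def glen {m : ℕ} (g : FG m) : ℕ := (FreeGroup.toWord g).length

/-- The cardinality of the sphere of radius `k` in the free group of rank `m`,
as a real number: `1` if `k = 0` and `2m(2m-1)^(k-1)` otherwise. -/
def sphereCard (m k : ℕ) : ℝ :=
  if k = 0 then 1 else 2 * (m : ℝ) * (2 * (m : ℝ) - 1) ^ (k - 1)

/-- `n_k(R)`: the number of elements of length `k` in `R`. -/
def nk {m : ℕ} (R : Set (FG m)) (k : ℕ) : ℕ := {g ∈ R | glen g = k}.ncard

/-- `f_k(R) = n_k(R) / |S_k|`: the frequency of elements of `R` among words of length `k`. -/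
def fk {m : ℕ} (R : Set (FG m)) (k : ℕ) : ℝ := (nk R k : ℝ) / sphereCard m k

/-- The frequency generating function `g_R(t) = ∑ f_k(R) t^k`. -/
def genFun {m : ℕ} (R : Set (FG m)) (t : ℝ) : ℝ := ∑' k : ℕ, fk R k * t ^ k

/-- The adjusted generating function `g*_R(t) = ∑ n_k(R) (t/(2m-1))^k`. -/
def genFunStar {m : ℕ} (R : Set (FG m)) (t : ℝ) : ℝ :=
  ∑' k : ℕ, (nk R k : ℝ) * (t / (2 * (m : ℝ) - 1)) ^ k

/-- `R` is thick: `lim_{t→1⁻} (1-t)·g_R(t)` exists and is positive. -/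
def IsThick {m : ℕ} (R : Set (FG m)) : Prop :=
  ∃ c : ℝ, 0 < c ∧
    Tendsto (fun t => (1 - t) * genFun R t) (nhdsWithin 1 (Set.Iio 1)) (nhds c)

/-- `R` is exponentially negligible (exponentially λ-measurable): there is `δ ∈ (0,1)`
with `f_k(R) < δ^k` for all sufficiently large `k`. -/
def ExpNegligible {m : ℕ} (R : Set (FG m)) : Prop :=
  ∃ δ : ℝ, 0 < δ ∧ δ < 1 ∧ ∀ᶠ k : ℕ in atTop, fk R k < δ ^ k

/-- `R ⊆ F` is a regular set if the language of reduced words of its elements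
(over the alphabet `Σ = X ∪ X⁻¹`, encoded as `Fin m × Bool`) is a regular language. -/
def IsRegularSet {m : ℕ} (R : Set (FG m)) : Prop :=
  Language.IsRegular {w : List (Fin m × Bool) | ∃ g ∈ R, FreeGroup.toWord g = w}

/-- The cone `C(w) = { wf : |wf| = |w| + |f| }`. -/
def cone {m : ℕ} (w : FG m) : Set (FG m) :=
  {g | ∃ f, g = w * f ∧ glen g = glen w + glen f}

/-- The right cone `C[w] = { fw : |fw| = |f| + |w| }`. -/
def coneR {m : ℕ} (w : FG m) : Set (FG m) :=
  {g | ∃ f, g = f * w ∧ glen g = glen f + glen w}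

/-- The double-based cone `C(u,v) = { ufv : |ufv| = |u| + |f| + |v| }`. -/
def dcone {m : ℕ} (u v : FG m) : Set (FG m) :=
  {g | ∃ f, g = u * f * v ∧ glen g = glen u + glen f + glen v}

/-- The prefix closure of `R`. -/
def prefixClosure {m : ℕ} (R : Set (FG m)) : Set (FG m) :=
  {p | ∃ g ∈ R, ∃ s, g = p * s ∧ glen g = glen p + glen s}

/-- A finite deterministic partial automaton over the alphabet
`Σ = X ∪ X⁻¹` (encoded as `Fin m × Bool`), with one initial and one final state. -/
structure PAut (m : ℕ) where
  n : ℕ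
  step : Fin n → Fin m × Bool → Option (Fin n)
  start : Fin n
  accept : Fin n

namespace PAut

variable {m : ℕ}

/-- Run the automaton from state `s` on the word `w`. -/
def evalFrom (A : PAut m) : Fin A.n → List (Fin m × Bool) → Option (Fin A.n)
  | s, [] => some s
  | s, a :: w =>
    match A.step s a with
    | none => none
    | some s' => A.evalFrom s' w

/-- The set of words accepted by `A`. -/
def words (A : PAut m) : Set (List (Fin m × Bool)) :=
  {w | A.evalFrom A.start w = some A.accept}

/-- The language of `A`, identified with a subset of the free group. -/
def lang (A : PAut m) : Set (FG m) :=
  (fun w => FreeGroup.mk w) '' A.words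

/-- Conditions (c)–(f) of a special automaton:
(c) every state is reachable from the initial state;
(d) the final state is reachable from every state;
(e) all transitions entering a given state carry the same label (the type of the state);
(f) if a state has type `x`, no transition labeled `x⁻¹` leaves it. -/
def CoreSpecial (A : PAut m) : Prop :=
  (∀ s, ∃ w, A.evalFrom A.start w = some s) ∧
  (∀ s, ∃ w, A.evalFrom s w = some A.accept) ∧
  (∀ s₁ a₁ s₂ a₂ s, A.step s₁ a₁ = some s → A.step s₂ a₂ = some s → a₁ = a₂) ∧
  (∀ s' a s, A.step s' a = some s → A.step s (a.1, !a.2) = none)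

/-- A special automaton over the free group: conditions (a)–(f), with distinct
initial and final states and no transition entering the initial state. -/
def IsSpecial (A : PAut m) : Prop :=
  A.start ≠ A.accept ∧ (∀ s a, A.step s a ≠ some A.start) ∧ A.CoreSpecial

/-- A special monoid automaton: conditions (c)–(f), with the initial state equal to
the final state. -/
def IsSpecialMonoidAut (A : PAut m) : Prop :=
  A.start = A.accept ∧ A.CoreSpecial

/-- `A` is `Σ`-complete: every state `s` has a type `x` and for every label
`y ≠ x⁻¹` the transition `δ(s,y)` is defined. -/
def SigmaComplete (A : PAut m) : Prop :=
  ∀ s, ∃ a, (∃ s', A.step s' a = some s) ∧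
    ∀ b, b ≠ (a.1, !a.2) → (A.step s b).isSome

end PAut

/-- A special monoid: the language of a special monoid automaton. -/
def IsSpecialMonoid {m : ℕ} (M : Set (FG m)) : Prop :=
  ∃ A : PAut m, A.IsSpecialMonoidAut ∧ M = A.lang

/-- A thick monoid: the language of a `Σ`-complete special monoid automaton. -/
def IsThickMonoid {m : ℕ} (M : Set (FG m)) : Prop :=
  ∃ A : PAut m, A.IsSpecialMonoidAut ∧ A.SigmaComplete ∧ M = A.lang

namespace SW

abbrev Ltr (m : ℕ) := Fin m × Bool

variable {m : ℕ}

def linv (p : Ltr m) : Ltr m := (p.1, !p.2)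

@[simp] lemma linv_linv (p : Ltr m) : linv (linv p) = p := by simp [linv]

lemma linv_ne (p : Ltr m) : linv p ≠ p :=
  fun h => Bool.not_ne_self p.2 (congrArg Prod.snd h)

lemma eq_linv_comm {p q : Ltr m} : p = linv q ↔ q = linv p := by
  constructor <;> (rintro rfl; simp)

/-- Reduced words as chains. -/
def RW (w : List (Ltr m)) : Prop := List.Chain' (fun p q => q ≠ linv p) w

lemma rw_nil : RW ([] : List (Ltr m)) := List.isChain_nil

lemma rw_singleton (p : Ltr m) : RW [p] := List.isChain_singleton p

lemma rw_reduce : ∀ w : List (Ltr m), RW (FreeGroup.reduce w)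
  | [] => rw_nil
  | p :: l => by
      have ih := rw_reduce l
      rw [FreeGroup.reduce.cons]
      rcases hr : FreeGroup.reduce l with _ | ⟨hd, tl⟩
      · exact rw_singleton p
      · rw [hr] at ih
        dsimp only
        split_ifs with h
        · exact ih.tail
        · refine List.isChain_cons_cons.2 ⟨?_, ih⟩
          intro he
          apply h
          rw [he]
          exact ⟨rfl, by simp [linv]⟩

lemma rw_toWord (g : FG m) : RW (FreeGroup.toWord g) := by
  have := rw_reduce (FreeGroup.toWord g)
  rwa [FreeGroup.reduce_toWord] at this

lemma reduce_eq_self_of_rw : ∀ {w : List (Ltr m)}, RW w → FreeGroup.reduce w = w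
  | [], _ => rfl
  | [p], _ => rfl
  | p :: q :: l, h => by
      have h2 : q ≠ linv p := (List.isChain_cons_cons.1 h).1
      have ih := reduce_eq_self_of_rw (List.isChain_cons_cons.1 h).2
      rw [FreeGroup.reduce.cons, ih]
      dsimp only
      rw [if_neg]
      intro ⟨h3, h4⟩
      exact h2 (by rw [linv]; ext <;> simp [h3, h4])

lemma reduce_eq_self_of_length {w : List (Ltr m)}
    (h : w.length ≤ (FreeGroup.reduce w).length) : FreeGroup.reduce w = w :=
  List.Sublist.eq_of_length_le (FreeGroup.Red.sublist (FreeGroup.reduce.red)) h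

lemma toWord_mk_of_rw {w : List (Ltr m)} (h : RW w) :
    FreeGroup.toWord (FreeGroup.mk w) = w := by
  rw [FreeGroup.toWord_mk, reduce_eq_self_of_rw h]

lemma glen_mk_of_rw {w : List (Ltr m)} (h : RW w) :
    glen (FreeGroup.mk w) = w.length := by
  rw [glen, toWord_mk_of_rw h]

section cones

variable {x : FG m} {a : Ltr m} (ha : FreeGroup.toWord x = [a])

include ha

lemma x_eq_mk : x = FreeGroup.mk [a] := by
  conv_lhs => rw [← FreeGroup.mk_toWord (x := x), ha]

lemma xinv_toWord : FreeGroup.toWord x⁻¹ = [linv a] := by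
  rw [FreeGroup.toWord_inv, ha]
  rfl

lemma glen_x : glen x = 1 := by rw [glen, ha]; rfl

lemma glen_xinv : glen x⁻¹ = 1 := by rw [glen, xinv_toWord ha]; rfl

lemma mem_coneR_iff {g : FG m} :
    g ∈ coneR x ↔ ∃ w, FreeGroup.toWord g = w ++ [a] := by
  constructor
  · rintro ⟨f, rfl, hl⟩
    refine ⟨FreeGroup.toWord f, ?_⟩
    have hg : f * x = FreeGroup.mk (FreeGroup.toWord f ++ [a]) := by
      conv_lhs => rw [← FreeGroup.mk_toWord (x := f), x_eq_mk ha, FreeGroup.mul_mk]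
    have hlen : (FreeGroup.toWord f ++ [a]).length ≤
        (FreeGroup.reduce (FreeGroup.toWord f ++ [a])).length := by
      have h1 : glen (f * x) = (FreeGroup.reduce (FreeGroup.toWord f ++ [a])).length := by
        rw [hg, glen, FreeGroup.toWord_mk]
      have := glen_x ha
      have hf : glen f = (FreeGroup.toWord f).length := rfl
      simp only [List.length_append, List.length_cons, List.length_nil]
      omega
    rw [hg, FreeGroup.toWord_mk, reduce_eq_self_of_length hlen]
  · rintro ⟨w, hw⟩
    have hrw : RW w := (rw_toWord g).prefix ⟨[a], hw.symm⟩
    refine ⟨FreeGroup.mk w, ?_, ?_⟩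
    · rw [x_eq_mk ha, FreeGroup.mul_mk, ← hw, FreeGroup.mk_toWord]
    · rw [glen_mk_of_rw hrw, glen_x ha, glen, hw]
      simp

lemma mem_dcone_iff {g : FG m} :
    g ∈ dcone x⁻¹ x ↔ ∃ w, FreeGroup.toWord g = linv a :: (w ++ [a]) := by
  constructor
  · rintro ⟨f, rfl, hl⟩
    refine ⟨FreeGroup.toWord f, ?_⟩
    have hx' : x⁻¹ = FreeGroup.mk [linv a] := by
      conv_lhs => rw [← FreeGroup.mk_toWord (x := x⁻¹), xinv_toWord ha]
    have hg : x⁻¹ * f * x = FreeGroup.mk (linv a :: (FreeGroup.toWord f ++ [a])) := by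
      conv_lhs => rw [hx', ← FreeGroup.mk_toWord (x := f), x_eq_mk ha]
      rw [FreeGroup.mul_mk, FreeGroup.mul_mk]
      simp
    have hlen : (linv a :: (FreeGroup.toWord f ++ [a])).length ≤
        (FreeGroup.reduce (linv a :: (FreeGroup.toWord f ++ [a]))).length := by
      have h1 : glen (x⁻¹ * f * x)
          = (FreeGroup.reduce (linv a :: (FreeGroup.toWord f ++ [a]))).length := by
        rw [hg, glen, FreeGroup.toWord_mk]
      have := glen_x ha
      have := glen_xinv ha
      have hf : glen f = (FreeGroup.toWord f).length := rfl
      simp only [List.length_cons, List.length_append, List.length_nil]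
      omega
    rw [hg, FreeGroup.toWord_mk, reduce_eq_self_of_length hlen]
  · rintro ⟨w, hw⟩
    have hrw : RW w := (rw_toWord g).infix ⟨[linv a], [a], by rw [hw]; simp⟩
    refine ⟨FreeGroup.mk w, ?_, ?_⟩
    · have hx' : x⁻¹ = FreeGroup.mk [linv a] := by
        conv_lhs => rw [← FreeGroup.mk_toWord (x := x⁻¹), xinv_toWord ha]
      rw [hx', x_eq_mk ha, FreeGroup.mul_mk, FreeGroup.mul_mk]
      conv_lhs => rw [← FreeGroup.mk_toWord (x := g), hw]
      simp
    · rw [glen_mk_of_rw hrw, glen_x ha, glen_xinv ha, glen, hw]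
      simp [Nat.add_comm]

end cones

end SW

namespace SW

variable {m : ℕ}

/-- The set of reduced words of length `k` satisfying `P`. -/
def WS (m k : ℕ) (P : List (Ltr m) → Prop) : Set (List (Ltr m)) :=
  {w | w.length = k ∧ RW w ∧ P w}

lemma WS_finite (k : ℕ) (P : List (Ltr m) → Prop) : (WS m k P).Finite :=
  (List.finite_length_eq (Ltr m) k).subset fun _ hw => hw.1

lemma WS_congr {k : ℕ} {P Q : List (Ltr m) → Prop}
    (h : ∀ w, w.length = k → RW w → (P w ↔ Q w)) : WS m k P = WS m k Q := by
  ext w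
  exact and_congr_right fun h1 => and_congr_right fun h2 => h w h1 h2

/-- Binary split. -/
lemma ncard_split (k : ℕ) (P Q : List (Ltr m) → Prop) :
    (WS m k P).ncard
      = (WS m k fun w => P w ∧ Q w).ncard + (WS m k fun w => P w ∧ ¬ Q w).ncard := by
  classical
  have hu : WS m k P = (WS m k fun w => P w ∧ Q w) ∪ (WS m k fun w => P w ∧ ¬ Q w) := by
    ext w
    by_cases h : Q w <;> simp [WS, h] <;> tauto
  have hd : Disjoint (WS m k fun w => P w ∧ Q w) (WS m k fun w => P w ∧ ¬ Q w) := by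
    rw [Set.disjoint_left]
    rintro w ⟨_, _, _, hq⟩ ⟨_, _, _, hnq⟩
    exact hnq hq
  rw [hu, Set.ncard_union_eq hd (WS_finite _ _) (WS_finite _ _)]

/-- Appending a fixed last letter is a bijection. -/
lemma ncard_append (k : ℕ) (c : Ltr m) (P : List (Ltr m) → Prop)
    (hP : ∀ (w : List (Ltr m)) (d : Ltr m), w ≠ [] → (P (w ++ [d]) ↔ P w)) :
    (WS m (k + 2) fun w => P w ∧ w.getLast? = some c).ncard
      = (WS m (k + 1) fun w => P w ∧ ¬ w.getLast? = some (linv c)).ncard := by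
  have himg : (fun w => w ++ [c]) '' (WS m (k + 1) fun w => P w ∧ ¬ w.getLast? = some (linv c))
      = WS m (k + 2) fun w => P w ∧ w.getLast? = some c := by
    ext v
    constructor
    · rintro ⟨w, ⟨hlen, hrw, hp, hlast⟩, rfl⟩
      have hne : w ≠ [] := by intro h; rw [h] at hlen; simp at hlen
      refine ⟨by simp [hlen], ?_, (hP w c hne).2 hp, List.getLast?_concat (l := w)⟩
      refine List.IsChain.append hrw (rw_singleton c) ?_
      rintro p hp' q hq'
      simp only [List.head?_cons, Option.mem_def, Option.some.injEq] at hq'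
      subst hq'
      intro hqc
      apply hlast
      rw [Option.mem_def] at hp'
      rw [hp', eq_linv_comm.1 hqc]
    · rintro ⟨hlen, hrw, hp, hlast⟩
      have hne : v ≠ [] := by intro h; rw [h] at hlen; simp at hlen
      have hv : v.dropLast ++ [c] = v := List.dropLast_append_getLast? c hlast
      have hnedl : v.dropLast ≠ [] := by
        intro h
        rw [← hv, h] at hlen
        simp at hlen
      refine ⟨v.dropLast, ⟨?_, ?_, ?_, ?_⟩, hv⟩
      · have := congrArg List.length hv
        simp only [List.length_append, List.length_cons, List.length_nil] at this
        omega
      · exact hrw.prefix ⟨[c], hv⟩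
      · exact (hP _ c hnedl).1 (by rw [hv]; exact hp)
      · intro hlast'
        rw [← hv] at hrw
        have h3 := (List.isChain_append.1 hrw).2.2 (linv c) hlast' c rfl
        exact h3 (linv_linv c).symm
  rw [← himg, Set.ncard_image_of_injOn ((List.append_left_injective [c]).injOn)]

end SW

namespace SW

variable {m : ℕ}

/-- Partition by last letter. -/
lemma ncard_partition (hm : 0 < m) (k : ℕ) (P : List (Ltr m) → Prop) :
    (WS m (k + 1) P).ncard
      = ∑ c : Ltr m, (WS m (k + 1) fun w => P w ∧ w.getLast? = some c).ncard := by
  classical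
  haveI : Inhabited (Ltr m) := ⟨(⟨0, hm⟩, true)⟩
  set S := (WS_finite (m := m) (k + 1) P).toFinset with hS
  have hcard : (WS m (k + 1) P).ncard = S.card := Set.ncard_eq_toFinset_card _ _
  have hmap : ∀ w ∈ S, w.getLastD default ∈ (Finset.univ : Finset (Ltr m)) := by
    intro w _; exact Finset.mem_univ _
  rw [hcard, Finset.card_eq_sum_card_fiberwise hmap]
  refine Finset.sum_congr rfl fun c _ => ?_
  rw [Set.ncard_eq_toFinset_card _ (WS_finite (k+1) _)]
  congr 1
  ext w
  simp only [Finset.mem_filter, Set.Finite.mem_toFinset, hS]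
  constructor
  · rintro ⟨⟨h1, h2, h3⟩, h4⟩
    have hne : w ≠ [] := by intro h; rw [h] at h1; simp at h1
    refine ⟨h1, h2, h3, ?_⟩
    rw [List.getLastD_eq_getLast?] at h4
    rcases List.getLast?_eq_getLast_of_ne_nil hne with h5
    rw [h5] at h4 ⊢
    simp at h4 ⊢
    exact h4
  · rintro ⟨h1, h2, h3, h4⟩
    have hne : w ≠ [] := by intro h; rw [h] at h1; simp at h1
    refine ⟨⟨h1, h2, h3⟩, ?_⟩
    rw [List.getLastD_eq_getLast?, h4]
    rfl

lemma rw_reverse {w : List (Ltr m)} (h : RW w) : RW w.reverse := by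
  unfold RW List.Chain'; rw [List.isChain_reverse]
  exact List.IsChain.imp (fun p q hpq => fun he => hpq (eq_linv_comm.1 he)) h

/-- Reversal: head constraints have the same counts as last constraints. -/
lemma ncard_head_eq_last (k : ℕ) (c : Ltr m) :
    (WS m k fun w => w.head? = some c).ncard
      = (WS m k fun w => w.getLast? = some c).ncard := by
  have himg : List.reverse '' (WS m k fun w => w.head? = some c)
      = WS m k fun w => w.getLast? = some c := by
    ext v
    constructor
    · rintro ⟨w, ⟨h1, h2, h3⟩, rfl⟩
      exact ⟨by simp [h1], rw_reverse h2, by show w.reverse.getLast? = _; rw [List.getLast?_reverse]; exact h3⟩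
    · rintro ⟨h1, h2, h3⟩
      exact ⟨v.reverse, ⟨by simp [h1], rw_reverse h2,
        by show v.reverse.head? = _; rw [List.head?_reverse]; exact h3⟩, by simp⟩
  rw [← himg, Set.ncard_image_of_injOn (List.reverse_injective.injOn)]

/-- Words of length 1. -/
lemma WS_one_eq (P : List (Ltr m) → Prop) :
    WS m 1 P = {w | ∃ b : Ltr m, w = [b] ∧ P [b]} := by
  ext w
  constructor
  · rintro ⟨h1, _, h3⟩
    rcases List.length_eq_one_iff.1 h1 with ⟨b, rfl⟩
    exact ⟨b, rfl, h3⟩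
  · rintro ⟨b, rfl, hb⟩
    exact ⟨rfl, rw_singleton b, hb⟩

lemma ncard_one_last (c : Ltr m) :
    (WS m 1 fun w => w.getLast? = some c).ncard = 1 := by
  rw [WS_one_eq]
  convert Set.ncard_singleton [c]
  ext w
  simp only [Set.mem_setOf_eq, Set.mem_singleton_iff]
  constructor
  · rintro ⟨b, rfl, hb⟩
    simp only [List.getLast?_singleton, Option.some.injEq] at hb
    rw [hb]
  · rintro rfl
    exact ⟨c, rfl, rfl⟩

lemma ncard_one_head_last (d c : Ltr m) :
    (WS m 1 fun w => w.head? = some d ∧ w.getLast? = some c).ncard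
      = if c = d then 1 else 0 := by
  rw [WS_one_eq]
  split_ifs with h
  · subst h
    convert Set.ncard_singleton [c]
    ext w
    simp only [Set.mem_setOf_eq, Set.mem_singleton_iff]
    constructor
    · rintro ⟨b, rfl, hb, hb'⟩
      simp only [List.getLast?_singleton, List.head?_cons, Option.some.injEq] at hb hb'
      rw [hb']
    · rintro rfl
      exact ⟨c, rfl, rfl, rfl⟩
  · convert Set.ncard_empty (List (Ltr m))
    ext w
    simp only [Set.mem_setOf_eq, Set.mem_empty_iff_false, iff_false, not_exists]
    rintro b ⟨rfl, hb, hb'⟩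
    simp only [List.getLast?_singleton, List.head?_cons, Option.some.injEq] at hb hb'
    exact h (by rw [← hb', ← hb])

end SW

namespace SW

variable {m : ℕ}

lemma card_univ_ltr : Fintype.card (Ltr m) = 2 * m := by
  simp [Fintype.card_prod, mul_comm]

lemma count_last (hm : 0 < m) : ∀ k : ℕ,
    (∀ c : Ltr m, (WS m (k+1) fun w => w.getLast? = some c).ncard = (2*m-1)^k) ∧
      (WS m (k+1) fun _ => True).ncard = 2*m*(2*m-1)^k := by
  intro k
  induction k with
  | zero =>
    have h1 : ∀ c : Ltr m, (WS m 1 fun w => w.getLast? = some c).ncard = (2*m-1)^0 := by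
      intro c; rw [pow_zero]; exact ncard_one_last c
    refine ⟨h1, ?_⟩
    rw [ncard_partition hm 0]
    have h2 : ∀ c : Ltr m,
        (WS m 1 fun w => True ∧ w.getLast? = some c).ncard = 1 := by
      intro c
      rw [WS_congr (Q := fun w => w.getLast? = some c) (fun w _ _ => by tauto)]
      exact ncard_one_last c
    rw [Finset.sum_congr rfl (fun c _ => h2 c), Finset.sum_const, Finset.card_univ,
      card_univ_ltr, smul_eq_mul, pow_zero]
  | succ k ih =>
    obtain ⟨ihL, ihT⟩ := ih
    have key : ∀ c : Ltr m,
        (WS m (k+2) fun w => w.getLast? = some c).ncard = (2*m-1)^(k+1) := by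
      intro c
      have e1 : (WS m (k+2) fun w => w.getLast? = some c)
          = WS m (k+2) fun w => True ∧ w.getLast? = some c :=
        WS_congr (fun w _ _ => by tauto)
      have e2 : (WS m (k+2) fun w => True ∧ w.getLast? = some c).ncard
          = (WS m (k+1) fun w => True ∧ ¬ w.getLast? = some (linv c)).ncard :=
        ncard_append k c (fun _ => True) (fun _ _ _ => Iff.rfl)
      have e3 : (WS m (k+1) fun _ => True).ncard
          = (WS m (k+1) fun w => True ∧ w.getLast? = some (linv c)).ncard
            + (WS m (k+1) fun w => True ∧ ¬ w.getLast? = some (linv c)).ncard :=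
        ncard_split (k+1) _ _
      have e4 : (WS m (k+1) fun w => True ∧ w.getLast? = some (linv c)).ncard
          = (2*m-1)^k := by
        rw [WS_congr (Q := fun w => w.getLast? = some (linv c)) (fun w _ _ => by tauto)]
        exact ihL (linv c)
      have e5 : 2*m*(2*m-1)^k = (2*m-1)^(k+1) + (2*m-1)^k := by
        have h2m : 2*m - 1 + 1 = 2*m := by omega
        calc 2*m*(2*m-1)^k = (2*m-1+1)*(2*m-1)^k := by rw [h2m]
        _ = (2*m-1)^(k+1) + (2*m-1)^k := by ring
      rw [e1, e2]
      omega
    refine ⟨key, ?_⟩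
    rw [ncard_partition hm (k+1)]
    have h2 : ∀ c : Ltr m,
        (WS m (k+2) fun w => True ∧ w.getLast? = some c).ncard = (2*m-1)^(k+1) := by
      intro c
      rw [WS_congr (Q := fun w => w.getLast? = some c) (fun w _ _ => by tauto)]
      exact key c
    rw [Finset.sum_congr rfl (fun c _ => h2 c), Finset.sum_const, Finset.card_univ,
      card_univ_ltr, smul_eq_mul]

lemma count_head (hm : 0 < m) (k : ℕ) (c : Ltr m) :
    (WS m (k+1) fun w => w.head? = some c).ncard = (2*m-1)^k := by
  rw [ncard_head_eq_last]
  exact (count_last hm k).1 c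

def chi (a c : Ltr m) : ℤ := if c.1 = a.1 then (m:ℤ) - 1 else -1
def mu (a c : Ltr m) : ℤ := if c = a then -(m:ℤ) else if c = linv a then (m:ℤ) else 0

lemma chi_linv (a c : Ltr m) : chi a (linv c) = chi a c := by unfold chi linv; rfl

lemma mu_linv (a c : Ltr m) : mu a (linv c) = - mu a c := by
  by_cases hc : c = a
  · subst hc
    rw [mu, mu, if_neg (linv_ne c), if_pos rfl, if_pos rfl]
    ring
  · by_cases hc' : c = linv a
    · subst hc'
      rw [mu, mu, linv_linv, if_pos rfl, if_neg hc, if_pos rfl]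
    · have h1 : linv c ≠ a := fun h => hc' (by rw [← linv_linv c, h])
      have h2 : linv c ≠ linv a := fun h => hc (by rw [← linv_linv c, h, linv_linv])
      rw [mu, mu, if_neg hc, if_neg hc', if_neg h1, if_neg h2]
      ring

lemma cast_q (hm : 0 < m) : ((2*m-1 : ℕ) : ℤ) = 2*(m:ℤ)-1 := by
  have h1 : (1:ℕ) ≤ 2*m := by omega
  rw [Nat.cast_sub h1]
  push_cast
  ring

lemma count_headlast (hm : 0 < m) (a : Ltr m) : ∀ k : ℕ, ∀ c : Ltr m,
    (2*(m:ℤ)) * ((WS m (k+1) fun w => w.head? = some (linv a) ∧ w.getLast? = some c).ncard : ℤ)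
      = (2*(m:ℤ)-1)^k + (-1)^k * chi a c + mu a c := by
  intro k
  induction k with
  | zero =>
    intro c
    rw [ncard_one_head_last (linv a) c, pow_zero, pow_zero, one_mul]
    by_cases h1 : c = linv a
    · subst h1
      rw [if_pos rfl, chi, mu, if_pos (by simp [linv]), if_neg (linv_ne a), if_pos rfl]
      push_cast
      ring
    · rw [if_neg h1]
      by_cases h2 : c = a
      · subst h2
        rw [chi, mu, if_pos rfl, if_pos rfl]
        push_cast
        ring
      · have h3 : c.1 ≠ a.1 := by
          intro h
          rcases Bool.eq_or_eq_not c.2 a.2 with h4 | h4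
          · exact h2 (Prod.ext h h4)
          · exact h1 (Prod.ext h (by simp [linv, h4]))
        rw [chi, mu, if_neg h3, if_neg h2, if_neg h1]
        push_cast
        ring
  | succ k ih =>
    intro c
    have e1 : (WS m (k+2) fun w => w.head? = some (linv a) ∧ w.getLast? = some c).ncard
        = (WS m (k+1) fun w =>
            (w.head? = some (linv a)) ∧ ¬ w.getLast? = some (linv c)).ncard := by
      refine ncard_append k c _ (fun w d hw => ?_)
      rcases w with _ | ⟨p, w⟩
      · exact absurd rfl hw
      · simp
    have e2 : (WS m (k+1) fun w => w.head? = some (linv a)).ncard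
        = (WS m (k+1) fun w =>
            (w.head? = some (linv a)) ∧ w.getLast? = some (linv c)).ncard
          + (WS m (k+1) fun w =>
            (w.head? = some (linv a)) ∧ ¬ w.getLast? = some (linv c)).ncard :=
      ncard_split (k+1) _ _
    have e3 := count_head hm k (linv a)
    have e4 := ih (linv c)
    rw [chi_linv, mu_linv] at e4
    have e2' : ((WS m (k+1) fun w => w.head? = some (linv a)).ncard : ℤ)
        = ((WS m (k+1) fun w =>
            (w.head? = some (linv a)) ∧ w.getLast? = some (linv c)).ncard : ℤ)
          + ((WS m (k+1) fun w =>
            (w.head? = some (linv a)) ∧ ¬ w.getLast? = some (linv c)).ncard : ℤ) := by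
      exact_mod_cast congrArg (Nat.cast : ℕ → ℤ) e2
    have e3' : ((WS m (k+1) fun w => w.head? = some (linv a)).ncard : ℤ)
        = (2*(m:ℤ)-1)^k := by
      rw [e3]
      rw [Nat.cast_pow, cast_q hm]
    have e1' : ((WS m (k+2) fun w =>
        w.head? = some (linv a) ∧ w.getLast? = some c).ncard : ℤ)
        = ((WS m (k+1) fun w =>
            (w.head? = some (linv a)) ∧ ¬ w.getLast? = some (linv c)).ncard : ℤ) := by
      exact_mod_cast congrArg (Nat.cast : ℕ → ℤ) e1
    rw [e1']
    have expand : (2*(m:ℤ)-1)^(k+1) = (2*(m:ℤ)) * (2*(m:ℤ)-1)^k - (2*(m:ℤ)-1)^k := by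
      ring
    linear_combination (-2*(m:ℤ))*e2' + 2*(m:ℤ)*e3' - e4 - expand

lemma count_M (hm : 0 < m) (a : Ltr m) (k : ℕ) :
    (2*(m:ℤ)) * ((WS m (k+1) fun w =>
        w.getLast? = some a ∧ ¬ w.head? = some (linv a)).ncard : ℤ)
      = (2*(m:ℤ)-1)^(k+1) - (-1)^k * ((m:ℤ)-1) + m := by
  have e1 : (WS m (k+1) fun w => w.getLast? = some a).ncard
      = (WS m (k+1) fun w => w.getLast? = some a ∧ w.head? = some (linv a)).ncard
        + (WS m (k+1) fun w => w.getLast? = some a ∧ ¬ w.head? = some (linv a)).ncard :=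
    ncard_split (k+1) _ _
  have e2 : (WS m (k+1) fun w => w.getLast? = some a ∧ w.head? = some (linv a))
      = WS m (k+1) fun w => w.head? = some (linv a) ∧ w.getLast? = some a :=
    WS_congr (fun w _ _ => and_comm)
  rw [e2] at e1
  have e3 : ((WS m (k+1) fun w => w.getLast? = some a).ncard : ℤ)
      = (2*(m:ℤ)-1)^k := by
    rw [(count_last hm k).1 a, Nat.cast_pow, cast_q hm]
  have e4 := count_headlast hm a k a
  have hchi : chi a a = (m:ℤ) - 1 := by rw [chi, if_pos rfl]
  have hmu : mu a a = -(m:ℤ) := by rw [mu, if_pos rfl]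
  rw [hchi, hmu] at e4
  have e1' : ((WS m (k+1) fun w => w.getLast? = some a).ncard : ℤ)
      = ((WS m (k+1) fun w => w.head? = some (linv a) ∧ w.getLast? = some a).ncard : ℤ)
        + ((WS m (k+1) fun w =>
            w.getLast? = some a ∧ ¬ w.head? = some (linv a)).ncard : ℤ) := by
    exact_mod_cast congrArg (Nat.cast : ℕ → ℤ) e1
  have expand : (2*(m:ℤ)-1)^(k+1) = (2*(m:ℤ)) * (2*(m:ℤ)-1)^k - (2*(m:ℤ)-1)^k := by
    ring
  linear_combination (-2*(m:ℤ))*e1' + 2*(m:ℤ)*e3 - e4 - expand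

section nkM

variable {x : FG m} {a : Ltr m}

lemma nk_M_zero (ha : FreeGroup.toWord x = [a]) :
    nk (insert (1 : FG m) (coneR x \ dcone x⁻¹ x)) 0 = 1 := by
  have : {g ∈ insert (1 : FG m) (coneR x \ dcone x⁻¹ x) | glen g = 0} = {(1 : FG m)} := by
    ext g
    simp only [Set.mem_setOf_eq, Set.mem_singleton_iff]
    constructor
    · rintro ⟨_, hg⟩
      rw [glen, List.length_eq_zero_iff] at hg
      exact FreeGroup.toWord_eq_nil_iff.1 hg
    · rintro rfl
      exact ⟨Set.mem_insert _ _, by rw [glen, FreeGroup.toWord_one]; rfl⟩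
  rw [nk, this, Set.ncard_singleton]

lemma nk_M_succ (ha : FreeGroup.toWord x = [a]) (k : ℕ) :
    nk (insert (1 : FG m) (coneR x \ dcone x⁻¹ x)) (k+1)
      = (WS m (k+1) fun w =>
          w.getLast? = some a ∧ ¬ w.head? = some (linv a)).ncard := by
  have himg : FreeGroup.toWord ''
      {g ∈ insert (1 : FG m) (coneR x \ dcone x⁻¹ x) | glen g = k+1}
      = WS m (k+1) fun w => w.getLast? = some a ∧ ¬ w.head? = some (linv a) := by
    ext v
    constructor
    · rintro ⟨g, ⟨hmem, hlen⟩, rfl⟩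
      have hg1 : g ≠ 1 := by
        intro h
        rw [h, glen, FreeGroup.toWord_one] at hlen
        simp at hlen
      rcases hmem with h | ⟨hcone, hdcone⟩
      · exact absurd h hg1
      rcases (mem_coneR_iff ha).1 hcone with ⟨w, hw⟩
      refine ⟨hlen, rw_toWord g, by rw [hw]; exact List.getLast?_concat (l := w), ?_⟩
      intro hhead
      apply hdcone
      rcases w with _ | ⟨p, w'⟩
      · rw [hw] at hhead
        simp only [List.nil_append, List.head?_cons, Option.some.injEq] at hhead
        exact absurd hhead.symm (linv_ne a)
      · rw [hw] at hhead
        simp only [List.cons_append, List.head?_cons, Option.some.injEq] at hhead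
        refine (mem_dcone_iff ha).2 ⟨w', ?_⟩
        rw [hw, hhead]
        rfl
    · rintro ⟨hlen, hrw, hlast, hhead⟩
      refine ⟨FreeGroup.mk v, ⟨?_, ?_⟩, toWord_mk_of_rw hrw⟩
      · refine Set.mem_insert_of_mem _ ⟨?_, ?_⟩
        · refine (mem_coneR_iff ha).2 ⟨v.dropLast, ?_⟩
          rw [toWord_mk_of_rw hrw]
          exact (List.dropLast_append_getLast? a hlast).symm
        · intro hd
          rcases (mem_dcone_iff ha).1 hd with ⟨w', hw'⟩
          rw [toWord_mk_of_rw hrw] at hw'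
          apply hhead
          rw [hw']
          rfl
      · rw [glen, toWord_mk_of_rw hrw, hlen]
  rw [nk, ← himg, Set.ncard_image_of_injOn (FreeGroup.toWord_injective.injOn)]

lemma nk_M_val (hm : 0 < m) (ha : FreeGroup.toWord x = [a]) (k : ℕ) :
    (2*(m:ℤ)) * (nk (insert (1 : FG m) (coneR x \ dcone x⁻¹ x)) (k+1) : ℤ)
      = (2*(m:ℤ)-1)^(k+1) - (-1)^k * ((m:ℤ)-1) + m := by
  rw [nk_M_succ ha k]
  exact count_M hm a k

end nkM

end SW


set_option maxHeartbeats 1600000 in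
/-- the generating function of `M = {1} ∪ (C[x] ∖ C(x⁻¹,x))`. -/
theorem stmt9 {m : ℕ} (hm : 2 ≤ m) (x : FG m) (hx : glen x = 1) :
    ∀ t ∈ Set.Ioo (-1 : ℝ) 1,
      genFun (insert (1 : FG m) (coneR x \ dcone x⁻¹ x)) t
        = 1 + t * (2 * (m : ℝ) - t) / (4 * (m : ℝ) ^ 2 * (1 - t))
          + t ^ 2 * ((2 * (m : ℝ) - 1) ^ 2 + t)
            / (4 * (m : ℝ) ^ 2 * ((2 * (m : ℝ) - 1) ^ 2 - t ^ 2)) := by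
  obtain ⟨a, ha⟩ := List.length_eq_one_iff.mp hx
  have hm0 : 0 < m := by omega
  set M : Set (FG m) := insert (1 : FG m) (coneR x \ dcone x⁻¹ x) with hM
  intro t ht
  obtain ⟨ht1, ht2⟩ := ht
  -- basic real constants
  set Q : ℝ := 2 * (m : ℝ) - 1 with hQdef
  have hmR : (2:ℝ) ≤ (m:ℝ) := by exact_mod_cast hm
  have hQ3 : (3:ℝ) ≤ Q := by rw [hQdef]; linarith
  have hQ0 : Q ≠ 0 := by linarith
  have hm0R : (m:ℝ) ≠ 0 := by positivity
  have habs : |t| < 1 := abs_lt.2 ⟨ht1, ht2⟩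
  have habsQ : |t| < Q := lt_of_lt_of_le habs (by linarith)
  have hQpos : (0:ℝ) < Q := by linarith
  -- the coefficients
  set α : ℝ := (2*(m:ℝ)-1) / (4*(m:ℝ)^2) with hα
  set β : ℝ := 1 / (4*(m:ℝ)) with hβ
  set γ : ℝ := -((m:ℝ)-1) / (4*(m:ℝ)^2) with hγ
  -- value of fk at 0
  have hf0 : fk M 0 * t ^ 0 = 1 := by
    rw [fk, SW.nk_M_zero ha, sphereCard]
    norm_num
  -- value of fk at k+1
  have hfk : ∀ k : ℕ, fk M (k+1) * t ^ (k+1)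
      = (t*α) * t^k + ((t*β) * (t/Q)^k + (t*γ) * (-t/Q)^k) := by
    intro k
    have hnk : 2*(m:ℝ) * ((nk M (k+1) : ℕ) : ℝ)
        = Q^(k+1) - (-1)^k * ((m:ℝ)-1) + (m:ℝ) := by
      have h := SW.nk_M_val hm0 ha k
      rw [hQdef, hM]
      exact_mod_cast h
    have hn' : ((nk M (k+1) : ℕ) : ℝ)
        = (Q^(k+1) - (-1)^k * ((m:ℝ)-1) + (m:ℝ)) / (2*(m:ℝ)) := by
      rw [eq_div_iff (mul_ne_zero two_ne_zero hm0R)]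
      linarith
    have hsph : sphereCard m (k+1) = 2*(m:ℝ) * Q^k := by
      rw [sphereCard, if_neg (Nat.succ_ne_zero k)]
      simp [hQdef]
    have hQk : Q^k ≠ 0 := pow_ne_zero _ hQ0
    have hneg : (-t/Q)^k = (-1)^k * (t/Q)^k := by
      rw [neg_div, neg_pow]
    rw [fk, hsph, hn', hneg, div_pow, hα, hβ, hγ, hQdef]
    have hQ0' : (2*(m:ℝ)-1) ≠ 0 := hQ0
    field_simp
    ring
  -- summability
  have hn1 : ‖t‖ < 1 := by rwa [Real.norm_eq_abs]
  have hn2 : ‖t/Q‖ < 1 := by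
    rw [Real.norm_eq_abs, abs_div, abs_of_pos hQpos, div_lt_one hQpos]
    exact habsQ
  have hn3 : ‖-t/Q‖ < 1 := by
    rw [Real.norm_eq_abs, abs_div, abs_neg, abs_of_pos hQpos, div_lt_one hQpos]
    exact habsQ
  have hs1 : Summable (fun k : ℕ => (t*α) * t^k) :=
    (summable_geometric_of_norm_lt_one hn1).mul_left _
  have hs2 : Summable (fun k : ℕ => (t*β) * (t/Q)^k) :=
    (summable_geometric_of_norm_lt_one hn2).mul_left _
  have hs3 : Summable (fun k : ℕ => (t*γ) * (-t/Q)^k) :=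
    (summable_geometric_of_norm_lt_one hn3).mul_left _
  have hshift : Summable (fun k : ℕ => fk M (k+1) * t^(k+1)) := by
    have : (fun k : ℕ => fk M (k+1) * t^(k+1))
        = fun k : ℕ => (t*α) * t^k + ((t*β) * (t/Q)^k + (t*γ) * (-t/Q)^k) :=
      funext hfk
    rw [this]
    exact hs1.add (hs2.add hs3)
  have hsum : Summable (fun k : ℕ => fk M k * t^k) :=
    (summable_nat_add_iff 1).1 hshift
  -- compute
  rw [genFun, hsum.tsum_eq_zero_add, hf0]
  have htail : ∑' k : ℕ, fk M (k+1) * t^(k+1)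
      = (t*α) * (1-t)⁻¹ + ((t*β) * (1-t/Q)⁻¹ + (t*γ) * (1-(-t/Q))⁻¹) := by
    rw [tsum_congr hfk, hs1.tsum_add (hs2.add hs3), hs2.tsum_add hs3,
      tsum_mul_left, tsum_mul_left, tsum_mul_left,
      tsum_geometric_of_norm_lt_one hn1, tsum_geometric_of_norm_lt_one hn2,
      tsum_geometric_of_norm_lt_one hn3]
  rw [htail]
  have habs2 := abs_lt.1 habsQ
  have hQmt : Q - t ≠ 0 := by intro h; linarith [habs2.2]
  have hQpt : Q + t ≠ 0 := by intro h; linarith [habs2.1]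
  have e2 : (1 - t/Q)⁻¹ = Q / (Q - t) := by
    rw [show (1 : ℝ) - t/Q = (Q - t)/Q by field_simp, inv_div]
  have e3 : (1 - -t/Q)⁻¹ = Q / (Q + t) := by
    rw [show (1 : ℝ) - -t/Q = (Q + t)/Q by field_simp; ring, inv_div]
  rw [e2, e3]
  have h1t : (1:ℝ) - t ≠ 0 := by intro h; linarith
  have h5 : -(2*(m:ℝ)-1) < t ∧ t < 2*(m:ℝ)-1 := by
    rw [← hQdef]; exact habs2
  have hq2 : (2*(m:ℝ)-1)^2 - t^2 ≠ 0 := by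
    intro h
    nlinarith [h5.1, h5.2]
  rw [hQdef] at hQmt hQpt
  rw [hα, hβ, hγ, hQdef]
  field_simp
  ring
end
end

section
/- Let F be the free group of rank m ≥ 2, let x ∈ Σ, and let M = {1} ∪ (C[x] ∖ C(x^{-1},x)). Then lim_{t→1⁻} (1−t)·g_M(t) = (2m−1)/(4m²); in particular M is thick. -/
open Filter Set

noncomputable section

namespace Stmt10Aux

abbrev Letter (m : ℕ) := Fin m × Bool

variable {m : ℕ}

def bar (p : Letter m) : Letter m := (p.1, !p.2)

@[simp] lemma bar_bar (p : Letter m) : bar (bar p) = p := by simp [bar]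

lemma bar_ne (p : Letter m) : bar p ≠ p :=
  fun h => Bool.not_ne_self p.2 (congrArg Prod.snd h)

lemma ne_bar (p : Letter m) : p ≠ bar p := (bar_ne p).symm

lemma bar_eq_iff {p q : Letter m} : bar p = q ↔ p = bar q := by
  constructor <;> rintro rfl <;> simp

lemma cancel_iff (x hd : Letter m) : (x.1 = hd.1 ∧ x.2 = !hd.2) ↔ hd = bar x := by
  constructor
  · rintro ⟨h1, h2⟩
    have : x = bar hd := by simp [bar, Prod.ext_iff, h1, h2]
    rw [this, bar_bar]
  · rintro rfl
    simp [bar]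

/-- A word is reduced iff no adjacent pair cancels. -/
def IsRed (w : List (Letter m)) : Prop := List.Chain' (fun p q => q ≠ bar p) w

lemma reduce_eq_self_iff (w : List (Letter m)) : FreeGroup.reduce w = w ↔ IsRed w := by
  induction w with
  | nil => simp [IsRed]; exact List.isChain_nil
  | cons x L ih =>
    have hle : (FreeGroup.reduce L).length ≤ L.length :=
      (FreeGroup.Red.sublist FreeGroup.reduce.red).length_le
    constructor
    · intro h
      rcases hL : FreeGroup.reduce L with _ | ⟨hd, tl⟩
      · simp only [FreeGroup.reduce.cons, hL] at h
        have : L = [] := by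
          have := h
          injection this with _ h2
          exact h2.symm
        subst this
        exact List.isChain_singleton x
      · simp only [FreeGroup.reduce.cons, hL] at h
        by_cases hc : x.1 = hd.1 ∧ x.2 = !hd.2
        · rw [if_pos hc] at h
          exfalso
          have h1 : tl.length = L.length + 1 := by rw [h]; simp
          have h2 : tl.length + 1 ≤ L.length := by
            have := hle; rw [hL] at this; simpa using this
          omega
        · rw [if_neg hc] at h
          have hL2 : L = hd :: tl := by
            injection h with _ h2
            exact h2.symm
          have hredL : FreeGroup.reduce L = L := by rw [hL, hL2]
          have hIsRedL : IsRed L := ih.mp hredL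
          rw [hL2]
          refine List.isChain_cons_cons.mpr ⟨?_, hL2 ▸ hIsRedL⟩
          exact fun he => hc ((cancel_iff x hd).mpr he)
    · intro h
      have hL : IsRed L := h.tail
      have hred : FreeGroup.reduce L = L := ih.mpr hL
      rcases L with _ | ⟨hd, tl⟩
      · rfl
      · have hx : hd ≠ bar x := (List.isChain_cons_cons.mp h).1
        have hc : ¬(x.1 = hd.1 ∧ x.2 = !hd.2) := fun hc => hx ((cancel_iff x hd).mp hc)
        simp only [FreeGroup.reduce.cons, hred, if_neg hc]

lemma isRed_toWord (g : FreeGroup (Fin m)) : IsRed g.toWord :=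
  (reduce_eq_self_iff _).mp (FreeGroup.reduce_toWord g)

lemma toWord_mk_of_isRed {w : List (Letter m)} (h : IsRed w) :
    (FreeGroup.mk w).toWord = w := by
  rw [FreeGroup.toWord_mk, (reduce_eq_self_iff w).mpr h]

end Stmt10Aux
namespace Stmt10Aux

variable {m : ℕ}

lemma glen_mk_of_isRed {w : List (Letter m)} (h : IsRed w) :
    glen (FreeGroup.mk w) = w.length := by
  rw [glen, toWord_mk_of_isRed h]

lemma toWord_mul_of_len {u v : FG m} (h : glen (u * v) = glen u + glen v) :
    (u * v).toWord = u.toWord ++ v.toWord := by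
  have h1 : u * v = FreeGroup.mk (u.toWord ++ v.toWord) := by
    rw [← FreeGroup.mul_mk, FreeGroup.mk_toWord, FreeGroup.mk_toWord]
  have h2 : (u * v).toWord = FreeGroup.reduce (u.toWord ++ v.toWord) := by
    rw [h1, FreeGroup.toWord_mk]
  have hsub : (FreeGroup.reduce (u.toWord ++ v.toWord)).Sublist (u.toWord ++ v.toWord) :=
    FreeGroup.Red.sublist FreeGroup.reduce.red
  have hlen : (FreeGroup.reduce (u.toWord ++ v.toWord)).length
      = (u.toWord ++ v.toWord).length := by
    rw [← h2]
    simpa [glen] using h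
  rw [h2, hsub.eq_of_length hlen]

lemma glen_mul_le (u v : FG m) : glen (u * v) ≤ glen u + glen v := by
  simpa [glen] using (FreeGroup.toWord_mul_sublist u v).length_le

lemma invRev_singleton (a : Letter m) : FreeGroup.invRev [a] = [bar a] := by
  simp [FreeGroup.invRev, bar]

variable (a : Letter m)

lemma toWord_mk_singleton : (FreeGroup.mk [a]).toWord = [a] :=
  toWord_mk_of_isRed (List.isChain_singleton a)

lemma glen_mk_singleton : glen (FreeGroup.mk [a]) = 1 := by
  rw [glen, toWord_mk_singleton]
  rfl

lemma inv_mk_singleton : (FreeGroup.mk [a])⁻¹ = FreeGroup.mk [bar a] := by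
  rw [FreeGroup.inv_mk, invRev_singleton]

lemma glen_inv_mk_singleton : glen (FreeGroup.mk [a])⁻¹ = 1 := by
  rw [inv_mk_singleton, glen_mk_singleton]

lemma coneR_iff (g : FG m) :
    g ∈ coneR (FreeGroup.mk [a]) ↔ g.toWord.getLast? = some a := by
  constructor
  · rintro ⟨f, rfl, hlen⟩
    rw [toWord_mul_of_len hlen, toWord_mk_singleton]
    exact List.getLast?_concat
  · intro hw
    obtain ⟨w', hw'⟩ := List.getLast?_eq_some_iff.mp hw
    have hred : IsRed (w' ++ [a]) := hw' ▸ isRed_toWord g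
    have hredw' : IsRed w' := (List.isChain_append.mp hred).1
    refine ⟨FreeGroup.mk w', ?_, ?_⟩
    · rw [← FreeGroup.mk_toWord (x := g), hw', ← FreeGroup.mul_mk]
    · rw [glen_mk_of_isRed hredw', glen_mk_singleton, glen, hw']
      simp

lemma dcone_iff (g : FG m) :
    g ∈ dcone (FreeGroup.mk [a])⁻¹ (FreeGroup.mk [a]) ↔
      ∃ v, g.toWord = bar a :: (v ++ [a]) := by
  constructor
  · rintro ⟨f, rfl, hlen⟩
    rw [glen_mk_singleton, glen_inv_mk_singleton] at hlen
    have h1 : glen ((FreeGroup.mk [a])⁻¹ * f) ≤ 1 + glen f := by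
      have := glen_mul_le (FreeGroup.mk [a])⁻¹ f
      rwa [glen_inv_mk_singleton] at this
    have h2 : glen ((FreeGroup.mk [a])⁻¹ * f * FreeGroup.mk [a]) ≤ glen ((FreeGroup.mk [a])⁻¹ * f) + 1 := by
      have := glen_mul_le ((FreeGroup.mk [a])⁻¹ * f) (FreeGroup.mk [a])
      rwa [glen_mk_singleton] at this
    have hu : glen ((FreeGroup.mk [a])⁻¹ * f) = 1 + glen f := by omega
    have hg : glen ((FreeGroup.mk [a])⁻¹ * f * FreeGroup.mk [a]) = glen ((FreeGroup.mk [a])⁻¹ * f) + glen (FreeGroup.mk [a]) := by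
      rw [glen_mk_singleton]; omega
    have e1 : ((FreeGroup.mk [a])⁻¹ * f * FreeGroup.mk [a]).toWord = ((FreeGroup.mk [a])⁻¹ * f).toWord ++ [a] := by
      rw [toWord_mul_of_len hg, toWord_mk_singleton]
    have e2 : ((FreeGroup.mk [a])⁻¹ * f).toWord = bar a :: f.toWord := by
      have : glen ((FreeGroup.mk [a])⁻¹ * f) = glen (FreeGroup.mk [a])⁻¹ + glen f := by
        rw [glen_inv_mk_singleton]; omega
      rw [toWord_mul_of_len this, inv_mk_singleton, toWord_mk_singleton]
      rfl
    exact ⟨f.toWord, by rw [e1, e2]; simp⟩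
  · rintro ⟨v, hv⟩
    have hred : IsRed (bar a :: (v ++ [a])) := hv ▸ isRed_toWord g
    have hredv : IsRed v := (List.isChain_append.mp (List.IsChain.tail hred)).1
    refine ⟨FreeGroup.mk v, ?_, ?_⟩
    · rw [inv_mk_singleton, FreeGroup.mul_mk, FreeGroup.mul_mk,
        ← FreeGroup.mk_toWord (x := g), hv]
      congr 1
    · rw [glen_mk_of_isRed hredv, glen_mk_singleton, glen_inv_mk_singleton, glen, hv]
      simp
      omega

end Stmt10Aux
namespace Stmt10Aux

open Finset

variable {m : ℕ}

lemma head?_concat {v : List (Letter m)} (h : v ≠ []) (j : Letter m) :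
    (v ++ [j]).head? = v.head? := by
  cases v with
  | nil => exact absurd rfl h
  | cons x l => rfl

/-- allowed extension letters -/
def ext (v : List (Letter m)) : Finset (Letter m) :=
  match v.getLast? with
  | none => Finset.univ
  | some ℓ => Finset.univ.erase (bar ℓ)

lemma mem_ext {v : List (Letter m)} {j : Letter m} :
    j ∈ ext v ↔ ∀ ℓ ∈ v.getLast?, j ≠ bar ℓ := by
  cases h : v.getLast? with
  | none => simp [ext, h]
  | some ℓ => simp [ext, h]

lemma card_ext {v : List (Letter m)} (h : v ≠ []) : (ext v).card = 2 * m - 1 := by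
  obtain ⟨ℓ, hℓ⟩ : ∃ ℓ, v.getLast? = some ℓ :=
    ⟨v.getLast h, List.getLast?_eq_getLast h⟩
  rw [ext, hℓ]
  rw [Finset.card_erase_of_mem (Finset.mem_univ _), Finset.card_univ]
  simp [Fintype.card_prod]
  ring_nf

lemma concat_injective :
    Function.Injective (fun p : (_ : List (Letter m)) × Letter m => p.1 ++ [p.2]) := by
  rintro ⟨v₁, j₁⟩ ⟨v₂, j₂⟩ h
  simp only at h
  have h1 : v₁ = v₂ := by
    have := congrArg List.dropLast h
    simpa [List.dropLast_concat] using this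
  have h2 : j₁ = j₂ := by
    have := congrArg List.getLast? h
    simpa [List.getLast?_concat] using this
  simp [h1, h2]

/-- one-step extension of a set of words -/
def stp (S : Finset (List (Letter m))) : Finset (List (Letter m)) :=
  (S.sigma (fun v => ext v)).image (fun p => p.1 ++ [p.2])

lemma mem_stp {S : Finset (List (Letter m))} {w : List (Letter m)} :
    w ∈ stp S ↔ ∃ v ∈ S, ∃ j ∈ ext v, w = v ++ [j] := by
  simp only [stp, Finset.mem_image, Finset.mem_sigma]
  constructor
  · rintro ⟨⟨v, j⟩, ⟨hv, hj⟩, rfl⟩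
    exact ⟨v, hv, j, hj, rfl⟩
  · rintro ⟨v, hv, j, hj, rfl⟩
    exact ⟨⟨v, j⟩, ⟨hv, hj⟩, rfl⟩

lemma card_stp_filter (S : Finset (List (Letter m))) (hS : ∀ v ∈ S, v ≠ [])
    (P : List (Letter m) → Prop) [DecidablePred P]
    (hP : ∀ v j, v ≠ [] → (P (v ++ [j]) ↔ P v))
    (Q : Letter m → Prop) [DecidablePred Q] :
    ((stp S).filter (fun w => P w ∧ ∀ j ∈ w.getLast?, Q j)).card
      = ∑ v ∈ S.filter P, ((ext v).filter Q).card := by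
  rw [← Finset.card_sigma]
  have himg : (stp S).filter (fun w => P w ∧ ∀ j ∈ w.getLast?, Q j)
      = ((S.filter P).sigma (fun v => (ext v).filter Q)).image
          (fun p => p.1 ++ [p.2]) := by
    ext w
    simp only [Finset.mem_filter, Finset.mem_image, Finset.mem_sigma, mem_stp]
    constructor
    · rintro ⟨⟨v, hv, j, hj, rfl⟩, hPw, hQw⟩
      refine ⟨⟨v, j⟩, ⟨⟨hv, (hP v j (hS v hv)).mp hPw⟩, hj, ?_⟩, rfl⟩
      exact hQw j (by simp)
    · rintro ⟨⟨v, j⟩, ⟨⟨hv, hPv⟩, hj, hQj⟩, rfl⟩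
      refine ⟨⟨v, hv, j, hj, rfl⟩, (hP v j (hS v hv)).mpr hPv, ?_⟩
      intro j' hj'
      rw [List.getLast?_concat] at hj'
      cases hj'
      exact hQj
  rw [himg, Finset.card_image_of_injective _ concat_injective]

/-- reduced words of length `n+1` -/
def Rall (m : ℕ) (n : ℕ) : Finset (List (Letter m)) :=
  stp^[n] (Finset.univ.image (fun j : Letter m => [j]))

lemma mem_Rall {n : ℕ} {w : List (Letter m)} :
    w ∈ Rall m n ↔ IsRed w ∧ w.length = n + 1 := by
  induction n generalizing w with
  | zero =>
    simp only [Rall, Function.iterate_zero, id_eq, Finset.mem_image, Finset.mem_univ,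
      true_and]
    constructor
    · rintro ⟨j, rfl⟩
      exact ⟨List.isChain_singleton j, rfl⟩
    · rintro ⟨-, hlen⟩
      obtain ⟨j, rfl⟩ := List.length_eq_one_iff.mp hlen
      exact ⟨j, rfl⟩
  | succ n ih =>
    rw [Rall, Function.iterate_succ_apply', ← Rall]
    rw [mem_stp]
    constructor
    · rintro ⟨v, hv, j, hj, rfl⟩
      obtain ⟨hred, hlen⟩ := ih.mp hv
      refine ⟨?_, by simp [hlen]⟩
      refine List.isChain_append.mpr ⟨hred, List.isChain_singleton j, ?_⟩
      intro ℓ hℓ y hy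
      rw [List.head?_cons, Option.mem_some_iff] at hy
      subst hy
      exact mem_ext.mp hj ℓ hℓ
    · rintro ⟨hred, hlen⟩
      have hne : w ≠ [] := by
        intro h; rw [h] at hlen; simp at hlen
      refine ⟨w.dropLast, ?_, w.getLast hne, ?_, (List.dropLast_append_getLast hne).symm⟩
      · rw [ih]
        have hw : w.dropLast ++ [w.getLast hne] = w := List.dropLast_append_getLast hne
        constructor
        · have := hw ▸ hred
          exact (List.isChain_append.mp this).1
        · rw [List.length_dropLast, hlen]
          omega
      · rw [mem_ext]
        intro ℓ hℓ
        have hw : w.dropLast ++ [w.getLast hne] = w := List.dropLast_append_getLast hne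
        have := hw ▸ hred
        have h3 := (List.isChain_append.mp this).2.2
        exact h3 ℓ hℓ _ (by simp)

lemma Rall_ne_nil {n : ℕ} {v : List (Letter m)} (hv : v ∈ Rall m n) : v ≠ [] := by
  intro h
  have := (mem_Rall.mp hv).2
  rw [h] at this
  simp at this

lemma Rall_succ (n : ℕ) : Rall m (n + 1) = stp (Rall m n) := by
  rw [Rall, Function.iterate_succ_apply', ← Rall]

end Stmt10Aux
namespace Stmt10Aux

open Finset

variable {m : ℕ}

lemma lastPred_iff {w : List (Letter m)} (hne : w ≠ []) (c : Letter m) :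
    (∀ j ∈ w.getLast?, j = c) ↔ w.getLast? = some c := by
  obtain ⟨ℓ, hℓ⟩ : ∃ ℓ, w.getLast? = some ℓ :=
    ⟨w.getLast hne, List.getLast?_eq_getLast hne⟩
  rw [hℓ]
  simp

/-- number of reduced words of length `n+1` whose head satisfies `P` and last letter
satisfies `Q` -/
def cnt (P : List (Letter m) → Prop) [DecidablePred P] (Q : Letter m → Prop)
    [DecidablePred Q] (n : ℕ) : ℕ :=
  ((Rall m n).filter (fun w => P w ∧ ∀ j ∈ w.getLast?, Q j)).card

lemma cnt_true_card (P : List (Letter m) → Prop) [DecidablePred P] (n : ℕ) :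
    cnt P (fun _ => True) n = ((Rall m n).filter P).card := by
  unfold cnt
  congr 1
  apply Finset.filter_congr
  intro w _
  simp

lemma cnt_last_eq (P : List (Letter m) → Prop) [DecidablePred P] (c : Letter m) (n : ℕ) :
    cnt P (fun j => j = c) n
      = (((Rall m n).filter P).filter (fun w => w.getLast? = some c)).card := by
  unfold cnt
  rw [Finset.filter_filter]
  congr 1
  apply Finset.filter_congr
  intro w hw
  have h := lastPred_iff (Rall_ne_nil hw) c
  constructor
  · rintro ⟨h1, h2⟩; exact ⟨h1, h.mp h2⟩
  · rintro ⟨h1, h2⟩; exact ⟨h1, h.mpr h2⟩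

lemma fiber_card {v : List (Letter m)} (hne : v ≠ []) (c : Letter m) :
    ((ext v).filter (fun j => j = c)).card
      = if v.getLast? = some (bar c) then 0 else 1 := by
  obtain ⟨ℓ, hℓ⟩ : ∃ ℓ, v.getLast? = some ℓ :=
    ⟨v.getLast hne, List.getLast?_eq_getLast hne⟩
  have hext : ext v = Finset.univ.erase (bar ℓ) := by
    simp only [ext, hℓ]
  rw [hext, hℓ, Finset.filter_eq']
  by_cases h : ℓ = bar c
  · subst h
    simp [bar_bar]
  · have hcb : c ≠ bar ℓ := fun hc => h (by rw [hc, bar_bar])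
    simp [Option.some_inj, h, Finset.mem_erase, hcb]

lemma fiber_card_true {v : List (Letter m)} (hne : v ≠ []) :
    ((ext v).filter (fun _ => True)).card = 2 * m - 1 := by
  rw [Finset.filter_true, card_ext hne]

lemma cnt_rec_eq (P : List (Letter m) → Prop) [DecidablePred P]
    (hP : ∀ v j, v ≠ [] → (P (v ++ [j]) ↔ P v)) (c : Letter m) (n : ℕ) :
    cnt P (fun j => j = c) (n + 1) + cnt P (fun j => j = bar c) n
      = cnt P (fun _ => True) n := by
  have h1 : cnt P (fun j => j = c) (n + 1)
      = ∑ v ∈ (Rall m n).filter P, ((ext v).filter (fun j => j = c)).card := by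
    unfold cnt
    rw [Rall_succ]
    exact card_stp_filter _ (fun v hv => Rall_ne_nil hv) P hP _
  have h2 : ∑ v ∈ (Rall m n).filter P, ((ext v).filter (fun j => j = c)).card
      = ∑ v ∈ (Rall m n).filter P,
          (if ¬ v.getLast? = some (bar c) then 1 else 0) := by
    apply Finset.sum_congr rfl
    intro v hv
    rw [fiber_card (Rall_ne_nil (Finset.mem_filter.mp hv).1) c]
    by_cases h : v.getLast? = some (bar c) <;> simp [h]
  have h3 : ∑ v ∈ (Rall m n).filter P,
        (if ¬ v.getLast? = some (bar c) then 1 else 0)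
      = (((Rall m n).filter P).filter
          (fun v => ¬ v.getLast? = some (bar c))).card := by
    rw [Finset.card_filter]
  rw [h1, h2, h3, cnt_last_eq, cnt_true_card]
  have := Finset.card_filter_add_card_filter_not
    (s := (Rall m n).filter P) (fun v => v.getLast? = some (bar c))
  omega

lemma cnt_rec_true (P : List (Letter m) → Prop) [DecidablePred P]
    (hP : ∀ v j, v ≠ [] → (P (v ++ [j]) ↔ P v)) (n : ℕ) :
    cnt (m := m) P (fun _ => True) (n + 1) = cnt P (fun _ => True) n * (2 * m - 1) := by
  have h1 : cnt (m := m) P (fun _ => True) (n + 1)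
      = ∑ v ∈ (Rall m n).filter P, ((ext v).filter (fun _ => True)).card := by
    unfold cnt
    rw [Rall_succ]
    exact card_stp_filter _ (fun v hv => Rall_ne_nil hv) P hP _
  rw [h1, Finset.sum_congr rfl
    (fun v hv => fiber_card_true (Rall_ne_nil (Finset.mem_filter.mp hv).1)),
    Finset.sum_const, smul_eq_mul, cnt_true_card]

lemma singleton_list_injective :
    Function.Injective (fun j : Letter m => [j]) := by
  intro a b h
  simpa using h

lemma cnt_zero (P : List (Letter m) → Prop) [DecidablePred P] (Q : Letter m → Prop)
    [DecidablePred Q] :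
    cnt P Q 0 = (Finset.univ.filter (fun j : Letter m => P [j] ∧ Q j)).card := by
  unfold cnt
  have himg : (Rall m 0).filter (fun w => P w ∧ ∀ j ∈ w.getLast?, Q j)
      = (Finset.univ.filter (fun j : Letter m => P [j] ∧ Q j)).image
          (fun j => [j]) := by
    ext w
    simp only [Rall, Function.iterate_zero, id_eq, Finset.mem_filter, Finset.mem_image,
      Finset.mem_univ, true_and]
    constructor
    · rintro ⟨⟨j, rfl⟩, hP, hQ⟩
      exact ⟨j, ⟨hP, hQ j (by simp)⟩, rfl⟩
    · rintro ⟨j, ⟨hP, hQ⟩, rfl⟩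
      refine ⟨⟨j, rfl⟩, hP, ?_⟩
      intro k hk
      simp only [List.getLast?_singleton, Option.mem_some_iff] at hk
      exact hk ▸ hQ
  rw [himg, Finset.card_image_of_injective _ singleton_list_injective]

end Stmt10Aux
namespace Stmt10Aux

open Finset

variable {m : ℕ}

section BaseValues

variable (a : Letter m)

lemma cnt_TT_zero : cnt (m := m) (fun _ => True) (fun _ => True) 0 = 2 * m := by
  rw [cnt_zero]
  simp only [true_and, Finset.filter_true]
  rw [Finset.card_univ]
  simp [Fintype.card_prod]
  ring

lemma cnt_Ta_zero : cnt (m := m) (fun _ => True) (fun j => j = a) 0 = 1 := by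
  rw [cnt_zero]
  simp only [true_and]
  rw [Finset.filter_eq', if_pos (Finset.mem_univ a), Finset.card_singleton]

lemma cnt_Tb_zero : cnt (m := m) (fun _ => True) (fun j => j = bar a) 0 = 1 := by
  rw [cnt_zero]
  simp only [true_and]
  rw [Finset.filter_eq', if_pos (Finset.mem_univ (bar a)), Finset.card_singleton]

lemma cnt_HT_zero :
    cnt (m := m) (fun w => w.head? = some (bar a)) (fun _ => True) 0 = 1 := by
  rw [cnt_zero]
  have : (fun j : Letter m => [j].head? = some (bar a) ∧ True)
      = fun j : Letter m => j = bar a := by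
    funext j
    simp [eq_comm]
  rw [show (Finset.univ.filter fun j : Letter m => [j].head? = some (bar a) ∧ True)
      = Finset.univ.filter (fun j : Letter m => j = bar a) from Finset.filter_congr
        (fun j _ => by simp)]
  rw [Finset.filter_eq', if_pos (Finset.mem_univ (bar a)), Finset.card_singleton]

lemma cnt_Ha_zero :
    cnt (m := m) (fun w => w.head? = some (bar a)) (fun j => j = a) 0 = 0 := by
  rw [cnt_zero, Finset.card_eq_zero, Finset.filter_eq_empty_iff]
  rintro j -
  rintro ⟨h1, rfl⟩
  simp only [List.head?_cons, Option.some_inj] at h1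
  exact ne_bar _ h1

lemma cnt_Hb_zero :
    cnt (m := m) (fun w => w.head? = some (bar a)) (fun j => j = bar a) 0 = 1 := by
  rw [cnt_zero]
  rw [show (Finset.univ.filter fun j : Letter m =>
        [j].head? = some (bar a) ∧ j = bar a)
      = Finset.univ.filter (fun j : Letter m => j = bar a) from Finset.filter_congr
        (fun j _ => by simp)]
  rw [Finset.filter_eq', if_pos (Finset.mem_univ (bar a)), Finset.card_singleton]

end BaseValues

/-- `q = 2m` as a real number -/
noncomputable def qR (m : ℕ) : ℝ := 2 * m

/-- `r = 2m - 1` as a real number -/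
noncomputable def rR (m : ℕ) : ℝ := 2 * m - 1

/-- closed form for the count of reduced words starting with `x⁻¹` and ending
with `x`. -/
noncomputable def uR (m : ℕ) (n : ℕ) : ℝ :=
  (rR m ^ n + (qR m - 2) / 2 * (-1 : ℝ) ^ n - qR m / 2) / qR m

lemma two_le_mR (hm : 2 ≤ m) : (2 : ℝ) ≤ (m : ℝ) := by exact_mod_cast hm

lemma qR_pos (hm : 2 ≤ m) : 0 < qR m := by
  have := two_le_mR hm; unfold qR; linarith

lemma qR_ne (hm : 2 ≤ m) : qR m ≠ 0 := ne_of_gt (qR_pos hm)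

lemma rR_ge3 (hm : 2 ≤ m) : 3 ≤ rR m := by
  have := two_le_mR hm; unfold rR; linarith

lemma rR_pos (hm : 2 ≤ m) : 0 < rR m := lt_of_lt_of_le (by norm_num) (rR_ge3 hm)

lemma rq (m : ℕ) : rR m = qR m - 1 := by unfold rR qR; ring

lemma uR_zero (hm : 2 ≤ m) : uR m 0 = 0 := by
  unfold uR
  rw [pow_zero, pow_zero]
  rw [div_eq_iff (qR_ne hm)]
  ring

lemma uR_succ (hm : 2 ≤ m) (n : ℕ) : uR m (n + 1) = rR m ^ n - uR m n - 1 := by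
  have hq := qR_ne hm
  unfold uR
  rw [rq, pow_succ, pow_succ]
  field_simp
  ring

lemma cast21 (hm : 2 ≤ m) : ((2 * m - 1 : ℕ) : ℝ) = rR m := by
  have h1 : 1 ≤ 2 * m := by omega
  push_cast [Nat.cast_sub h1]
  unfold rR
  ring

lemma closed_forms (hm : 2 ≤ m) (a : Letter m) (n : ℕ) :
    ((cnt (m := m) (fun _ => True) (fun j => j = a) n : ℝ) = rR m ^ n) ∧
    ((cnt (m := m) (fun _ => True) (fun j => j = bar a) n : ℝ) = rR m ^ n) ∧
    ((cnt (m := m) (fun _ => True) (fun _ => True) n : ℝ) = qR m * rR m ^ n) ∧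
    ((cnt (m := m) (fun w => w.head? = some (bar a)) (fun j => j = a) n : ℝ)
        = uR m n) ∧
    ((cnt (m := m) (fun w => w.head? = some (bar a)) (fun j => j = bar a) n : ℝ)
        = uR m n + 1) ∧
    ((cnt (m := m) (fun w => w.head? = some (bar a)) (fun _ => True) n : ℝ)
        = rR m ^ n) := by
  have hPT : ∀ (v : List (Letter m)) (j : Letter m), v ≠ [] →
      ((fun _ => True) (v ++ [j]) ↔ (fun _ => True) v) := by
    intro v j _; simp
  have hPH : ∀ (v : List (Letter m)) (j : Letter m), v ≠ [] →
      ((v ++ [j]).head? = some (bar a) ↔ v.head? = some (bar a)) := by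
    intro v j hv
    rw [head?_concat hv]
  induction n with
  | zero =>
    rw [cnt_Ta_zero, cnt_Tb_zero, cnt_TT_zero, cnt_Ha_zero, cnt_Hb_zero, cnt_HT_zero,
      uR_zero hm]
    have h1 : ((2 * m : ℕ) : ℝ) = qR m := by unfold qR; push_cast; ring
    simp [h1]
  | succ n ih =>
    obtain ⟨iTa, iTb, iTT, iHa, iHb, iHT⟩ := ih
    have recTa := cnt_rec_eq (m := m) (fun _ => True) hPT a n
    have recTb := cnt_rec_eq (m := m) (fun _ => True) hPT (bar a) n
    have recTT := cnt_rec_true (m := m) (fun _ => True) hPT n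
    have recHa := cnt_rec_eq (m := m) (fun w => w.head? = some (bar a)) hPH a n
    have recHb := cnt_rec_eq (m := m) (fun w => w.head? = some (bar a)) hPH (bar a) n
    have recHT := cnt_rec_true (m := m) (fun w => w.head? = some (bar a)) hPH n
    simp only [bar_bar] at recTb recHb
    have cTa := congrArg (Nat.cast : ℕ → ℝ) recTa
    have cTb := congrArg (Nat.cast : ℕ → ℝ) recTb
    have cTT := congrArg (Nat.cast : ℕ → ℝ) recTT
    have cHa := congrArg (Nat.cast : ℕ → ℝ) recHa
    have cHb := congrArg (Nat.cast : ℕ → ℝ) recHb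
    have cHT := congrArg (Nat.cast : ℕ → ℝ) recHT
    push_cast at cTa cTb cTT cHa cHb cHT
    rw [cast21 hm] at cTT cHT
    have hu : uR m (n + 1) = rR m ^ n - uR m n - 1 := uR_succ hm n
    have e1 : rR m ^ (n + 1) = qR m * rR m ^ n - rR m ^ n := by
      rw [pow_succ, rq]; ring
    refine ⟨by linarith [cTa], by linarith [cTb], ?_, by linarith [cHa],
      by linarith [cHb], ?_⟩
    · have h : (cnt (m := m) (fun _ => True) (fun _ => True) (n + 1) : ℝ)
          = qR m * rR m ^ n * rR m := by rw [cTT, iTT]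
      rw [h, pow_succ]; ring
    · have h : (cnt (m := m) (fun w => w.head? = some (bar a)) (fun _ => True)
          (n + 1) : ℝ) = rR m ^ n * rR m := by rw [cHT, iHT]
      rw [h, pow_succ]
end Stmt10Aux
namespace Stmt10Aux

open Finset

variable {m : ℕ}

/-- number of reduced words of length `n+1` ending with `a` and not starting
with `bar a` -/
def Ncnt (a : Letter m) (n : ℕ) : ℕ :=
  ((Rall m n).filter
    (fun w => (∀ j ∈ w.getLast?, j = a) ∧ ¬ w.head? = some (bar a))).card

lemma Ncnt_add (a : Letter m) (n : ℕ) :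
    Ncnt a n + cnt (m := m) (fun w => w.head? = some (bar a)) (fun j => j = a) n
      = cnt (m := m) (fun _ => True) (fun j => j = a) n := by
  have h1 : Ncnt a n = (((Rall m n).filter (fun w => ∀ j ∈ w.getLast?, j = a)).filter
      (fun w => ¬ w.head? = some (bar a))).card := by
    unfold Ncnt
    rw [Finset.filter_filter]
  have h2 : cnt (m := m) (fun w => w.head? = some (bar a)) (fun j => j = a) n
      = (((Rall m n).filter (fun w => ∀ j ∈ w.getLast?, j = a)).filter
          (fun w => w.head? = some (bar a))).card := by
    unfold cnt
    rw [Finset.filter_filter]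
    congr 1
    apply Finset.filter_congr
    intro w _
    tauto
  have h3 : cnt (m := m) (fun _ => True) (fun j => j = a) n
      = ((Rall m n).filter (fun w => ∀ j ∈ w.getLast?, j = a)).card := by
    unfold cnt
    congr 1
    apply Finset.filter_congr
    intro w _
    simp
  rw [h1, h2, h3]
  have := Finset.card_filter_add_card_filter_not
    (s := (Rall m n).filter (fun w => ∀ j ∈ w.getLast?, j = a))
    (fun w => w.head? = some (bar a))
  omega

lemma Ncnt_real (hm : 2 ≤ m) (a : Letter m) (n : ℕ) :
    (Ncnt a n : ℝ) = rR m ^ n - uR m n := by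
  have h := congrArg (Nat.cast : ℕ → ℝ) (Ncnt_add a n)
  push_cast at h
  have h1 := (closed_forms hm a n).1
  have h2 := (closed_forms hm a n).2.2.2.1
  linarith

end Stmt10Aux
namespace Stmt10Aux

open Finset

variable {m : ℕ}

lemma decomp {w : List (Letter m)} {a : Letter m} (hl : w.getLast? = some a)
    (hh : w.head? = some (bar a)) : ∃ v, w = bar a :: (v ++ [a]) := by
  obtain ⟨ys, rfl⟩ := List.getLast?_eq_some_iff.mp hl
  cases ys with
  | nil =>
    simp only [List.nil_append, List.head?_cons, Option.some_inj] at hh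
    exact absurd hh.symm (bar_ne a)
  | cons c t =>
    have hc : c = bar a := by
      simpa using hh
    exact ⟨t, by simp [hc]⟩

/-- the monoid `M` -/
def Mset (a : Letter m) : Set (FG m) :=
  insert (1 : FG m)
    (coneR (FreeGroup.mk [a]) \ dcone (FreeGroup.mk [a])⁻¹ (FreeGroup.mk [a]))

lemma glen_one : glen (1 : FG m) = 0 := by
  simp [glen, FreeGroup.toWord_one]

lemma glen_eq_zero {g : FG m} : glen g = 0 ↔ g = 1 := by
  rw [glen, List.length_eq_zero_iff, FreeGroup.toWord_eq_nil_iff]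

lemma nk_Mset_zero (a : Letter m) : nk (Mset a) 0 = 1 := by
  have h : {g ∈ Mset a | glen g = 0} = {1} := by
    ext g
    simp only [Set.mem_sep_iff, Set.mem_singleton_iff]
    constructor
    · rintro ⟨-, hg⟩
      exact glen_eq_zero.mp hg
    · rintro rfl
      exact ⟨Set.mem_insert _ _, glen_one⟩
  rw [nk, h, Set.ncard_singleton]

lemma nk_Mset_succ (a : Letter m) (n : ℕ) : nk (Mset a) (n + 1) = Ncnt a n := by
  classical
  set S : Set (FG m) := {g ∈ Mset a | glen g = n + 1} with hS
  have himg : FreeGroup.toWord '' S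
      = ↑((Rall m n).filter
          (fun w => (∀ j ∈ w.getLast?, j = a) ∧ ¬ w.head? = some (bar a))) := by
    ext w
    simp only [Set.mem_image, Finset.coe_filter, Set.mem_setOf_eq, Finset.mem_coe,
      Finset.mem_filter]
    constructor
    · rintro ⟨g, hgS, rfl⟩
      obtain ⟨hgM, hglen⟩ := hgS
      have hg1 : g ≠ 1 := by
        intro h
        rw [h, glen_one] at hglen
        omega
      have hgc : g ∈ coneR (FreeGroup.mk [a])
          \ dcone (FreeGroup.mk [a])⁻¹ (FreeGroup.mk [a]) := by
        rcases hgM with h | h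
        · exact absurd h hg1
        · exact h
      have hlast : g.toWord.getLast? = some a := (coneR_iff a g).mp hgc.1
      refine ⟨mem_Rall.mpr ⟨isRed_toWord g, hglen⟩, ?_, ?_⟩
      · intro j hj
        rw [hlast, Option.mem_some_iff] at hj
        exact hj.symm
      · intro hh
        apply hgc.2
        rw [dcone_iff]
        obtain ⟨v, hv⟩ := decomp hlast hh
        exact ⟨v, hv⟩
    · rintro ⟨hmem, hlast, hhead⟩
      obtain ⟨hred, hlen⟩ := mem_Rall.mp hmem
      have hne : w ≠ [] := by
        intro h
        rw [h] at hlen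
        simp at hlen
      have htw : (FreeGroup.mk w).toWord = w := toWord_mk_of_isRed hred
      refine ⟨FreeGroup.mk w, ⟨?_, ?_⟩, htw⟩
      · refine Set.mem_insert_iff.mpr (Or.inr ⟨?_, ?_⟩)
        · rw [coneR_iff, htw]
          exact (lastPred_iff hne a).mp hlast
        · intro hd
          rw [dcone_iff] at hd
          obtain ⟨v, hv⟩ := hd
          rw [htw] at hv
          apply hhead
          rw [hv]
          rfl
      · rw [glen, htw, hlen]
  have h2 : nk (Mset a) (n + 1) = S.ncard := rfl
  rw [h2, ← Set.ncard_image_of_injective S FreeGroup.toWord_injective, himg,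
    Set.ncard_coe_finset]
  rfl

lemma sphereCard_succ (n : ℕ) : sphereCard m (n + 1) = qR m * rR m ^ n := by
  rw [sphereCard, if_neg (Nat.succ_ne_zero n)]
  simp only [Nat.add_sub_cancel]
  rw [qR, rR]

lemma fk_Mset_zero (a : Letter m) : fk (Mset a) 0 = 1 := by
  rw [fk, nk_Mset_zero, sphereCard]
  simp

lemma fk_Mset_succ (hm : 2 ≤ m) (a : Letter m) (n : ℕ) :
    fk (Mset a) (n + 1) = (rR m ^ n - uR m n) / (qR m * rR m ^ n) := by
  rw [fk, nk_Mset_succ, Ncnt_real hm, sphereCard_succ]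

end Stmt10Aux
namespace Stmt10Aux

open Filter Set

variable {m : ℕ}

lemma fk_sub (hm : 2 ≤ m) (a : Letter m) (n : ℕ) :
    fk (Mset a) (n + 1) - rR m / qR m ^ 2
      = (qR m / 2 - (qR m - 2) / 2 * (-1 : ℝ) ^ n) / (qR m ^ 2 * rR m ^ n) := by
  have hq := qR_ne hm
  have hrn : rR m ^ n ≠ 0 := pow_ne_zero _ (ne_of_gt (rR_pos hm))
  rw [fk_Mset_succ hm a n, uR, rq]
  rw [rq] at hrn
  field_simp
  ring

lemma fk_sub_bound (hm : 2 ≤ m) (a : Letter m) (n : ℕ) :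
    |fk (Mset a) (n + 1) - rR m / qR m ^ 2| ≤ (1 / 3 : ℝ) ^ n := by
  have hq4 : (4 : ℝ) ≤ qR m := by
    have := two_le_mR hm; unfold qR; linarith
  have hr3 := rR_ge3 hm
  have hrn : (0 : ℝ) < rR m ^ n := pow_pos (rR_pos hm) n
  have hq2 : (0 : ℝ) < qR m ^ 2 := by positivity
  rw [fk_sub hm a n, abs_div]
  have hden : |qR m ^ 2 * rR m ^ n| = qR m ^ 2 * rR m ^ n := by
    rw [abs_of_pos (by positivity)]
  have hnum : |qR m / 2 - (qR m - 2) / 2 * (-1 : ℝ) ^ n| ≤ qR m - 1 := by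
    rcases Nat.even_or_odd n with he | ho
    · rw [he.neg_one_pow]
      have h1 : qR m / 2 - (qR m - 2) / 2 * 1 = 1 := by ring
      rw [h1, abs_one]
      linarith
    · rw [ho.neg_one_pow]
      have h1 : qR m / 2 - (qR m - 2) / 2 * (-1) = qR m - 1 := by ring
      rw [h1, abs_of_nonneg (by linarith)]
  rw [hden]
  calc |qR m / 2 - (qR m - 2) / 2 * (-1 : ℝ) ^ n| / (qR m ^ 2 * rR m ^ n)
      ≤ (qR m - 1) / (qR m ^ 2 * rR m ^ n) := by
        apply div_le_div_of_nonneg_right hnum (by positivity) |>.trans_eq rfl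
    _ ≤ (1 / 3 : ℝ) ^ n := by
        rw [div_pow, one_pow, div_le_div_iff₀ (by positivity) (by positivity)]
        have h3n : (3 : ℝ) ^ n ≤ rR m ^ n := pow_le_pow_left₀ (by norm_num) hr3 n
        have h1 : qR m - 1 ≤ qR m ^ 2 := by nlinarith
        have h2 := mul_le_mul h1 h3n (by positivity) (le_of_lt hq2)
        linarith

lemma L_eq (m : ℕ) : rR m / qR m ^ 2 = (2 * (m : ℝ) - 1) / (4 * (m : ℝ) ^ 2) := by
  unfold rR qR
  ring_nf

lemma main_tendsto (hm : 2 ≤ m) (a : Letter m) :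
    Tendsto (fun t => (1 - t) * genFun (Mset a) t)
      (nhdsWithin 1 (Set.Iio 1)) (nhds (rR m / qR m ^ 2)) := by
  set L : ℝ := rR m / qR m ^ 2 with hLdef
  set E : ℕ → ℝ := fun k => fk (Mset a) k - L with hEdef
  have hq4 : (4 : ℝ) ≤ qR m := by have := two_le_mR hm; unfold qR; linarith
  have hLpos : 0 < L := by
    rw [hLdef]
    apply div_pos (by have := rR_ge3 hm; linarith) (by positivity)
  have hLle : L ≤ 1 := by
    rw [hLdef, div_le_one (by positivity), rq]
    nlinarith
  have hEb : ∀ k, |E k| ≤ 3 * (1 / 3 : ℝ) ^ k := by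
    intro k
    cases k with
    | zero =>
      simp only [hEdef, fk_Mset_zero, pow_zero, mul_one]
      rw [abs_of_nonneg (by linarith)]
      linarith
    | succ n =>
      have h := fk_sub_bound hm a n
      calc |E (n + 1)| ≤ (1 / 3 : ℝ) ^ n := h
        _ = 3 * (1 / 3 : ℝ) ^ (n + 1) := by rw [pow_succ]; ring
  have hgeo : Summable (fun k => 3 * (1 / 3 : ℝ) ^ k) :=
    (summable_geometric_of_lt_one (by norm_num) (by norm_num)).mul_left 3
  have hsumE : Summable E :=
    Summable.of_norm_bounded hgeo (fun k => by
      rw [Real.norm_eq_abs]; exact hEb k)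
  set C : ℝ := ∑' k, 3 * (1 / 3 : ℝ) ^ k with hCdef
  have hC0 : 0 ≤ C := tsum_nonneg (fun k => by positivity)
  have hterm : ∀ t : ℝ, t ∈ Set.Ioo (0 : ℝ) 1 → ∀ k, ‖E k * t ^ k‖ ≤ 3 * (1 / 3 : ℝ) ^ k := by
    intro t ht k
    rw [Real.norm_eq_abs, abs_mul, abs_pow]
    calc |E k| * |t| ^ k ≤ (3 * (1 / 3 : ℝ) ^ k) * 1 := by
          apply mul_le_mul (hEb k) ?_ (by positivity) (by positivity)
          exact pow_le_one₀ (abs_nonneg t)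
            (by rw [abs_of_nonneg (le_of_lt ht.1)]; exact le_of_lt ht.2)
      _ = 3 * (1 / 3 : ℝ) ^ k := mul_one _
  have key : ∀ t ∈ Set.Ioo (0 : ℝ) 1,
      (1 - t) * genFun (Mset a) t = L + (1 - t) * ∑' k, E k * t ^ k := by
    intro t ht
    have ht0 : (0 : ℝ) ≤ t := le_of_lt ht.1
    have ht1 : t < 1 := ht.2
    have hsum1 : Summable (fun k => L * t ^ k) :=
      (summable_geometric_of_lt_one ht0 ht1).mul_left L
    have hsum2 : Summable (fun k => E k * t ^ k) :=
      Summable.of_norm_bounded hgeo (hterm t ht)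
    have hfk : (fun k => fk (Mset a) k * t ^ k)
        = fun k => L * t ^ k + E k * t ^ k := by
      funext k
      simp only [hEdef]
      ring
    rw [genFun, hfk, Summable.tsum_add hsum1 hsum2, tsum_mul_left,
      tsum_geometric_of_lt_one ht0 ht1]
    have h1t : (1 : ℝ) - t ≠ 0 := by intro h; rw [sub_eq_zero] at h; linarith
    field_simp
  have hIoo : Set.Ioo (0 : ℝ) 1 ∈ nhdsWithin 1 (Set.Iio 1) :=
    Ioo_mem_nhdsLT_of_mem ⟨zero_lt_one, le_refl 1⟩
  have htend0 : Tendsto (fun t => (1 - t) * ∑' k, E k * t ^ k)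
      (nhdsWithin 1 (Set.Iio 1)) (nhds 0) := by
    apply squeeze_zero_norm' (a := fun t => C * (1 - t))
    · filter_upwards [hIoo] with t ht
      rw [Real.norm_eq_abs, abs_mul]
      have hb : |∑' k, E k * t ^ k| ≤ C := by
        rw [← Real.norm_eq_abs]
        exact tsum_of_norm_bounded hgeo.hasSum (hterm t ht)
      have h1 : |1 - t| = 1 - t := abs_of_nonneg (by linarith [ht.2])
      calc |1 - t| * |∑' k, E k * t ^ k| ≤ |1 - t| * C :=
            mul_le_mul_of_nonneg_left hb (abs_nonneg _)
        _ = C * (1 - t) := by rw [h1]; ring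
    · have hc : Tendsto (fun t : ℝ => C * (1 - t)) (nhds 1) (nhds (C * (1 - 1))) :=
        (continuous_const.mul (continuous_const.sub continuous_id)).tendsto 1
      have : Tendsto (fun t : ℝ => C * (1 - t)) (nhds 1) (nhds 0) := by
        simpa using hc
      exact this.mono_left nhdsWithin_le_nhds
  have hfinal : Tendsto (fun t => L + (1 - t) * ∑' k, E k * t ^ k)
      (nhdsWithin 1 (Set.Iio 1)) (nhds L) := by
    have := tendsto_const_nhds (x := L) (f := nhdsWithin (1:ℝ) (Set.Iio 1)) |>.add htend0
    simpa using this
  apply Filter.Tendsto.congr' ?_ hfinal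
  filter_upwards [hIoo] with t ht
  exact (key t ht).symm

end Stmt10Aux
/-- the Cesaro density of `M = {1} ∪ (C[x] ∖ C(x⁻¹,x))` is
`(2m-1)/(4m²)`; in particular `M` is thick. -/
theorem stmt10 {m : ℕ} (hm : 2 ≤ m) (x : FG m) (hx : glen x = 1) :
    Tendsto (fun t => (1 - t) * genFun (insert (1 : FG m) (coneR x \ dcone x⁻¹ x)) t)
      (nhdsWithin 1 (Set.Iio 1)) (nhds ((2 * (m : ℝ) - 1) / (4 * (m : ℝ) ^ 2))) ∧
    IsThick (insert (1 : FG m) (coneR x \ dcone x⁻¹ x)) := by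
  obtain ⟨a, ha⟩ := List.length_eq_one_iff.mp hx
  have hxa : x = FreeGroup.mk [a] := by rw [← FreeGroup.mk_toWord (x := x), ha]
  have hset : insert (1 : FG m) (coneR x \ dcone x⁻¹ x) = Stmt10Aux.Mset a := by
    rw [hxa]; rfl
  have h := Stmt10Aux.main_tendsto hm a
  rw [Stmt10Aux.L_eq m] at h
  rw [hset]
  have hpos : 0 < (2 * (m : ℝ) - 1) / (4 * (m : ℝ) ^ 2) := by
    have hm2 : (2 : ℝ) ≤ (m : ℝ) := by exact_mod_cast hm
    apply div_pos <;> nlinarith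
  exact ⟨h, (2 * (m : ℝ) - 1) / (4 * (m : ℝ) ^ 2), hpos, h⟩
end
end

section
/- Let F be the free group of rank m ≥ 2 and let a, b ∈ Σ with b ∉ {a, a^{-1}}. Then for all real t ∈ (−1,1): g_{C(a,b)}(t) = t²/(4m²(1−t)) + t²/(4m²(2m−1+t)). -/
open Filter Set

noncomputable section

section Aux
open List

namespace FGaux

variable {α : Type*} [DecidableEq α]

/-- The no-cancellation relation on letters. -/
def Rr (x y : α × Bool) : Prop := ¬(x.1 = y.1 ∧ x.2 = !y.2)

instance : DecidableEq (α × Bool) := inferInstance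
instance (x y : α × Bool) : Decidable (Rr x y) := by unfold Rr; infer_instance

theorem chain'_reduce (L : List (α × Bool)) : List.Chain' Rr (FreeGroup.reduce L) := by
  induction L with
  | nil => exact List.isChain_nil
  | cons x L ih =>
    rw [FreeGroup.reduce.cons]
    rcases h : FreeGroup.reduce L with _ | ⟨hd, tl⟩
    · exact List.isChain_singleton x
    · rw [h] at ih
      dsimp only
      split_ifs with hc
      · exact ih.tail
      · exact List.isChain_cons_cons.2 ⟨hc, ih⟩

theorem reduce_eq_self_of_chain' {L : List (α × Bool)} (h : List.Chain' Rr L) :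
    FreeGroup.reduce L = L := by
  induction L with
  | nil => rfl
  | cons x L ih =>
    rw [FreeGroup.reduce.cons, ih h.tail]
    rcases L with _ | ⟨hd, tl⟩
    · rfl
    · dsimp only
      rw [if_neg (List.isChain_cons_cons.1 h).1]

end FGaux

namespace FGaux2
open FGaux

variable {α : Type*} [DecidableEq α] [Fintype α]

/-- Finset of reduced words of length `n+1` starting with `A`. -/
def RW (A : α × Bool) : ℕ → Finset (List (α × Bool))
  | 0 => {[A]}
  | n+1 => (RW A n).biUnion fun w =>
      (Finset.univ.filter fun c : α × Bool => ∀ d ∈ w.getLast?, Rr d c).image fun c => w ++ [c]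

theorem mem_RW (A : α × Bool) (n : ℕ) (w : List (α × Bool)) :
    w ∈ RW A n ↔ List.Chain' Rr w ∧ w.length = n + 1 ∧ w.head? = some A := by
  induction n generalizing w with
  | zero =>
    simp only [RW, Finset.mem_singleton]
    constructor
    · rintro rfl; exact ⟨List.isChain_singleton A, by simp, by simp⟩
    · rintro ⟨-, hl, hh⟩
      rcases w with _ | ⟨x, t⟩
      · simp at hh
      · simp at hl hh
        simp [hl, hh]
  | succ n ih =>
    simp only [RW, Finset.mem_biUnion, Finset.mem_image, Finset.mem_filter, Finset.mem_univ,
      true_and]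
    constructor
    · rintro ⟨v, hv, c, hc, rfl⟩
      obtain ⟨hch, hlen, hhd⟩ := ih v |>.1 hv
      have hvne : v ≠ [] := by rintro rfl; simp at hlen
      refine ⟨?_, by simp [hlen], ?_⟩
      · unfold List.Chain'; rw [List.isChain_append]
        exact ⟨hch, List.isChain_singleton c, fun x hx y hy => by
          simp at hy; subst hy; exact hc x hx⟩
      · rw [List.head?_append_of_ne_nil _ hvne, hhd]
    · rintro ⟨hch, hlen, hhd⟩
      have hwne : w ≠ [] := by rintro rfl; simp at hhd
      have hdne : w.dropLast ≠ [] := by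
        rw [← List.length_pos_iff_ne_nil, List.length_dropLast]; omega
      have hw' : w.dropLast ++ [w.getLast hwne] = w := List.dropLast_append_getLast hwne
      have hch' : List.Chain' Rr (w.dropLast ++ [w.getLast hwne]) := by rw [hw']; exact hch
      unfold List.Chain' at hch'; rw [List.isChain_append] at hch'
      refine ⟨w.dropLast, ?_, w.getLast hwne, ?_, hw'⟩
      · apply (ih _).2
        refine ⟨hch.prefix (List.dropLast_prefix w), by simp [List.length_dropLast, hlen], ?_⟩
        have h2 := List.head?_append_of_ne_nil w.dropLast (l₂ := [w.getLast hwne]) hdne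
        rw [hw', hhd] at h2
        exact h2.symm
      · intro d hd
        exact hch'.2.2 d hd _ rfl

theorem RW_ne_nil {A : α × Bool} {n : ℕ} {w : List (α × Bool)} (h : w ∈ RW A n) : w ≠ [] := by
  obtain ⟨-, -, hh⟩ := (mem_RW A n w).1 h
  rintro rfl; simp at hh

theorem filter_allowed_card {w : List (α × Bool)} (hw : w ≠ []) :
    (Finset.univ.filter fun c : α × Bool => ∀ d ∈ w.getLast?, Rr d c).card
      = 2 * Fintype.card α - 1 := by
  set d₀ := w.getLast hw with hd₀
  have hlast : w.getLast? = some d₀ := List.getLast?_eq_getLast hw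
  have : (Finset.univ.filter fun c : α × Bool => ∀ d ∈ w.getLast?, Rr d c)
      = Finset.univ.erase (d₀.1, !d₀.2) := by
    ext c
    simp only [Finset.mem_filter, Finset.mem_univ, true_and, Finset.mem_erase, and_true, hlast,
      Option.mem_some_iff]
    constructor
    · intro h hc
      exact h d₀ rfl ⟨by rw [hc], by rw [hc]; simp⟩
    · rintro h d rfl ⟨h1, h2⟩
      exact h (by rw [Prod.ext_iff]; exact ⟨h1.symm, by rw [h2]; simp⟩)
  rw [this, Finset.card_erase_of_mem (Finset.mem_univ _)]
  simp [Fintype.card_prod, mul_comm]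

theorem RW_pieces_disjoint {A : α × Bool} {n : ℕ} :
    ∀ v₁ ∈ RW A n, ∀ v₂ ∈ RW A n, v₁ ≠ v₂ →
      Disjoint ((Finset.univ.filter fun c : α × Bool => ∀ d ∈ v₁.getLast?, Rr d c).image
          fun c => v₁ ++ [c])
        ((Finset.univ.filter fun c : α × Bool => ∀ d ∈ v₂.getLast?, Rr d c).image
          fun c => v₂ ++ [c]) := by
  intro v₁ _ v₂ _ hne
  simp only [Finset.disjoint_left, Finset.mem_image]
  rintro w ⟨c₁, -, rfl⟩ ⟨c₂, -, h⟩
  apply hne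
  have := congrArg List.dropLast h
  simpa [List.dropLast_concat] using this.symm

theorem card_RW (A : α × Bool) (n : ℕ) :
    (RW A n).card = (2 * Fintype.card α - 1) ^ n := by
  induction n with
  | zero => simp [RW]
  | succ n ih =>
    rw [RW, Finset.card_biUnion RW_pieces_disjoint]
    have : ∀ v ∈ RW A n,
        ((Finset.univ.filter fun c : α × Bool => ∀ d ∈ v.getLast?, Rr d c).image
          fun c => v ++ [c]).card = 2 * Fintype.card α - 1 := by
      intro v hv
      rw [Finset.card_image_of_injective _ (fun c₁ c₂ h => by
        simpa using List.append_cancel_left h)]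
      exact filter_allowed_card (RW_ne_nil hv)
    rw [Finset.sum_congr rfl this, Finset.sum_const, smul_eq_mul, ih, pow_succ, mul_comm]

/-- number of reduced words of length `n+1` starting with `A` ending with `B`. -/
def uc (A B : α × Bool) (n : ℕ) : ℕ :=
  ((RW A n).filter fun w => w.getLast? = some B).card

theorem uc_zero {A B : α × Bool} (h : B ≠ A) : uc A B 0 = 0 := by
  rw [uc, Finset.card_eq_zero]
  ext w
  simp only [RW, Finset.mem_filter, Finset.mem_singleton, Finset.notMem_empty, iff_false]
  rintro ⟨rfl, hl⟩
  simp only [List.getLast?_singleton, Option.some_inj] at hl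
  exact h hl.symm

theorem uc_succ (A B : α × Bool) (n : ℕ) :
    uc A B (n + 1) + uc A (B.1, !B.2) n = (2 * Fintype.card α - 1) ^ n := by
  have step1 : (RW A (n+1)).filter (fun w => w.getLast? = some B)
      = ((RW A n).filter fun v => ∀ d ∈ v.getLast?, Rr d B).image (fun v => v ++ [B]) := by
    ext w
    simp only [Finset.mem_filter, Finset.mem_image, RW, Finset.mem_biUnion, Finset.mem_univ,
      true_and]
    constructor
    · rintro ⟨⟨v, hv, c, hc, rfl⟩, hlast⟩
      rw [List.getLast?_concat] at hlast
      obtain rfl : c = B := by simpa using hlast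
      exact ⟨v, ⟨hv, hc⟩, rfl⟩
    · rintro ⟨v, ⟨hv, hc⟩, rfl⟩
      exact ⟨⟨v, hv, B, hc, rfl⟩, List.getLast?_concat⟩
  have step2 : uc A B (n+1) = ((RW A n).filter fun v => ∀ d ∈ v.getLast?, Rr d B).card := by
    rw [uc, step1, Finset.card_image_of_injective _ (fun v₁ v₂ h => List.append_cancel_right h)]
  have step3 : ((RW A n).filter fun v => ∀ d ∈ v.getLast?, Rr d B)
      = (RW A n).filter fun v => ¬(v.getLast? = some (B.1, !B.2)) := by
    apply Finset.filter_congr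
    intro v hv
    have hvne := RW_ne_nil hv
    rw [List.getLast?_eq_getLast hvne]
    simp only [Option.mem_some_iff, Option.some_inj]
    constructor
    · intro h heq
      exact h _ rfl ⟨by rw [heq], by rw [heq]⟩
    · rintro h d rfl ⟨h1, h2⟩
      exact h (Prod.ext h1 h2)
  have hsplit := Finset.card_filter_add_card_filter_not
    (s := RW A n) (p := fun v => v.getLast? = some (B.1, !B.2))
  rw [step2, step3, uc, card_RW A n] at *
  omega

theorem uc_closed {A B : α × Bool} (hc : 1 ≤ Fintype.card α) (h1 : B ≠ A)
    (h2 : (B.1, !B.2) ≠ A) (n : ℕ) :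
    (uc A B n : ℤ) * (2 * Fintype.card α)
      = (2 * Fintype.card α - 1 : ℤ) ^ n - (-1) ^ n := by
  set c : ℕ := Fintype.card α
  have hQ : ((2 * c - 1 : ℕ) : ℤ) = 2 * (c : ℤ) - 1 := by
    have : 1 ≤ 2 * c := by omega
    push_cast [Nat.cast_sub this]; ring
  have key : ∀ n, uc A B n = uc A (B.1, !B.2) n ∧
      (uc A B n : ℤ) * (2 * c) = (2 * (c : ℤ) - 1) ^ n - (-1) ^ n := by
    intro n
    induction n with
    | zero => rw [uc_zero h1, uc_zero h2]; simp
    | succ n ih =>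
      obtain ⟨heq, hval⟩ := ih
      have k1 := uc_succ A B n
      have k2 := uc_succ A (B.1, !B.2) n
      simp only [Bool.not_not, Prod.mk.eta] at k2
      constructor
      · omega
      · have : (uc A B (n+1) : ℤ) = ((2 * c - 1 : ℕ) : ℤ) ^ n - uc A (B.1, !B.2) n := by
          have := congrArg (fun x : ℕ => (x : ℤ)) k1
          push_cast at this ⊢
          linarith
        rw [this, hQ, ← heq]
        have : (uc A B n : ℤ) * (2 * c) = (2 * (c : ℤ) - 1) ^ n - (-1) ^ n := hval
        ring_nf
        ring_nf at this
        linarith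
  exact (key n).2

end FGaux2

end Aux


section Bridge
open FGaux FGaux2 List

variable {m : ℕ}

theorem glen_eq_norm (g : FG m) : glen g = FreeGroup.norm g := rfl

theorem toWord_chain' (g : FG m) : List.Chain' Rr g.toWord := by
  have := chain'_reduce (α := Fin m) g.toWord
  rwa [FreeGroup.reduce_toWord] at this

theorem glen_mk_of_chain' {w : List (Fin m × Bool)} (h : List.Chain' Rr w) :
    (FreeGroup.mk w).toWord = w := by
  rw [FreeGroup.toWord_mk, reduce_eq_self_of_chain' h]

theorem toWord_mul_add {x y : FG m} (h : glen (x * y) = glen x + glen y) :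
    (x * y).toWord = x.toWord ++ y.toWord :=
  (FreeGroup.toWord_mul_sublist x y).eq_of_length (by rw [List.length_append]; exact h)

theorem mem_dcone_iff {a b : FG m} {A B : Fin m × Bool}
    (hA : a.toWord = [A]) (hB : b.toWord = [B]) (g : FG m) :
    g ∈ dcone a b ↔ ∃ w', g.toWord = A :: w' ++ [B] := by
  have hga : glen a = 1 := by rw [glen, hA]; rfl
  have hgb : glen b = 1 := by rw [glen, hB]; rfl
  constructor
  · rintro ⟨f, rfl, hlen⟩
    have h1 : glen (a * f * b) ≤ glen (a * f) + glen b := FreeGroup.norm_mul_le _ _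
    have h2 : glen (a * f) ≤ glen a + glen f := FreeGroup.norm_mul_le _ _
    have e1 : glen (a * f * b) = glen (a * f) + glen b := by omega
    have e2 : glen (a * f) = glen a + glen f := by omega
    refine ⟨f.toWord, ?_⟩
    rw [toWord_mul_add e1, toWord_mul_add e2, hA, hB]
    simp
  · rintro ⟨w', hw⟩
    have hch : List.Chain' Rr (A :: w' ++ [B]) := by rw [← hw]; exact toWord_chain' g
    have hchw' : List.Chain' Rr w' := hch.tail.prefix (List.prefix_append w' [B])
    refine ⟨FreeGroup.mk w', ?_, ?_⟩
    · have : g = FreeGroup.mk g.toWord := (FreeGroup.mk_toWord).symm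
      rw [this, hw, show a = FreeGroup.mk [A] by rw [← hA, FreeGroup.mk_toWord],
        show b = FreeGroup.mk [B] by rw [← hB, FreeGroup.mk_toWord],
        FreeGroup.mul_mk, FreeGroup.mul_mk]
      simp
    · rw [hga, hgb, glen, hw, glen, glen_mk_of_chain' hchw']
      simp
      ring

theorem nk_dcone_zero {a b : FG m} {A B : Fin m × Bool}
    (hA : a.toWord = [A]) (hB : b.toWord = [B]) :
    nk (dcone a b) 0 = 0 := by
  have hempty : {g ∈ dcone a b | glen g = 0} = (∅ : Set (FG m)) := by
    ext g
    simp only [Set.mem_setOf_eq, Set.mem_empty_iff_false, iff_false, not_and]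
    intro hg
    obtain ⟨w', hw⟩ := (mem_dcone_iff hA hB g).1 hg
    intro h0
    rw [glen, hw] at h0
    simp at h0
  rw [nk, hempty, Set.ncard_empty]

theorem nk_dcone_succ {a b : FG m} {A B : Fin m × Bool}
    (hA : a.toWord = [A]) (hB : b.toWord = [B]) (hAB : A ≠ B) (n : ℕ) :
    nk (dcone a b) (n + 1) = uc A B n := by
  classical
  have himg : FreeGroup.toWord '' {g ∈ dcone a b | glen g = n + 1}
      = ↑((RW A n).filter fun w => w.getLast? = some B) := by
    ext w
    simp only [Set.mem_image, Set.mem_setOf_eq, Finset.coe_filter, mem_RW]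
    constructor
    · rintro ⟨g, ⟨hg, hlen⟩, rfl⟩
      obtain ⟨w', hw⟩ := (mem_dcone_iff hA hB g).1 hg
      rw [glen] at hlen
      refine ⟨⟨toWord_chain' g, by omega, by rw [hw]; rfl⟩, ?_⟩
      rw [hw, show A :: w' ++ [B] = (A :: w') ++ [B] by simp, List.getLast?_concat]
    · rintro ⟨⟨hch, hlen, hhd⟩, hlast⟩
      refine ⟨FreeGroup.mk w, ⟨?_, ?_⟩, glen_mk_of_chain' hch⟩
      · rw [mem_dcone_iff hA hB, glen_mk_of_chain' hch]
        -- decompose w = A :: w' ++ [B]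
        have hwne : w ≠ [] := by rintro rfl; simp at hhd
        have hdl : w.dropLast ++ [w.getLast hwne] = w := List.dropLast_append_getLast hwne
        have hlastB : w.getLast hwne = B := by
          rw [List.getLast?_eq_getLast hwne] at hlast
          exact Option.some_inj.1 hlast
        have hdne : w.dropLast ≠ [] := by
          intro h
          rw [h] at hdl
          rw [← hdl] at hhd
          simp at hhd
          exact hAB (hhd.symm.trans hlastB)
        obtain ⟨x, t, hxt⟩ : ∃ x t, w.dropLast = x :: t := by
          rcases h : w.dropLast with _ | ⟨x, t⟩
          · exact absurd h hdne
          · exact ⟨x, t, rfl⟩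
        have hxA : x = A := by
          have h2 := List.head?_append_of_ne_nil w.dropLast (l₂ := [w.getLast hwne]) hdne
          rw [hdl, hhd, hxt] at h2
          simpa using h2.symm
        exact ⟨t, by rw [← hdl, hxt, hxA, hlastB]⟩
      · rw [glen, glen_mk_of_chain' hch, hlen]
  have hcard : nk (dcone a b) (n + 1)
      = (((RW A n).filter fun w => w.getLast? = some B) : Finset (List (Fin m × Bool))).card := by
    rw [nk, ← Set.ncard_coe_finset, ← himg,
      Set.ncard_image_of_injective _ FreeGroup.toWord_injective]
  rw [hcard]; rfl

end Bridge

set_option maxHeartbeats 2000000 in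
/-- the generating function of `C(a,b)` for letters `a, b` with
`b ∉ {a, a⁻¹}`. -/
theorem stmt14 {m : ℕ} (hm : 2 ≤ m) (a b : FG m)
    (ha : glen a = 1) (hb : glen b = 1) (hba : b ≠ a) (hba' : b ≠ a⁻¹) :
    ∀ t ∈ Set.Ioo (-1 : ℝ) 1,
      genFun (dcone a b) t
        = t ^ 2 / (4 * (m : ℝ) ^ 2 * (1 - t))
          + t ^ 2 / (4 * (m : ℝ) ^ 2 * (2 * (m : ℝ) - 1 + t)) := by
  classical
  unfold glen at ha hb
  obtain ⟨A, hA⟩ := List.length_eq_one_iff.1 ha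
  obtain ⟨B, hB⟩ := List.length_eq_one_iff.1 hb
  have hAB : A ≠ B := fun h =>
    hba (FreeGroup.toWord_injective (by rw [hA, hB, h])).symm
  have hBA : B ≠ A := fun h => hAB h.symm
  have hBAi : (B.1, !B.2) ≠ A := by
    intro h
    apply hba'
    apply FreeGroup.toWord_injective
    rw [hB, FreeGroup.toWord_inv, hA, ← h]
    simp [FreeGroup.invRev]
  -- the counting identity
  have hcount : ∀ n : ℕ, (FGaux2.uc A B n : ℝ) * (2 * m)
      = (2 * (m : ℝ) - 1) ^ n - (-1) ^ n := by
    intro n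
    have h := FGaux2.uc_closed (A := A) (B := B)
      (by rw [Fintype.card_fin]; omega) hBA hBAi n
    rw [Fintype.card_fin] at h
    exact_mod_cast h
  -- basic inequalities
  have hm2 : (2 : ℝ) ≤ (m : ℝ) := by exact_mod_cast hm
  set q : ℝ := 2 * (m : ℝ) - 1 with hqdef
  have hq3 : (3 : ℝ) ≤ q := by rw [hqdef]; linarith
  have hq0 : q ≠ 0 := by linarith
  have hm0 : (m : ℝ) ≠ 0 := by linarith
  intro t ht
  obtain ⟨ht1, ht2⟩ := ht
  have habs : |t| < 1 := abs_lt.2 ⟨ht1, ht2⟩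
  have hqt : 0 < q + t := by linarith
  have ht1' : (1 : ℝ) - t ≠ 0 := by linarith
  set s : ℝ := -t / q with hsdef
  have hsabs : ‖s‖ < 1 := by
    rw [hsdef, Real.norm_eq_abs, abs_div, abs_neg]
    rw [abs_of_pos (show (0:ℝ) < q by linarith)]
    rw [div_lt_one (show (0:ℝ) < q by linarith)]
    linarith [habs]
  have htabs : ‖t‖ < 1 := by rwa [Real.norm_eq_abs]
  have h1s : (1 : ℝ) - s ≠ 0 := by
    rw [hsdef]
    have : 1 - -t / q = (q + t) / q := by field_simp; ring
    rw [this]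
    exact div_ne_zero (by linarith) hq0
  -- values of fk
  have hf0 : fk (dcone a b) 0 = 0 := by
    rw [fk, nk_dcone_zero hA hB]; simp
  have hfs : ∀ n : ℕ, fk (dcone a b) (n + 1) = (FGaux2.uc A B n : ℝ) / (2 * m * q ^ n) := by
    intro n
    rw [fk, nk_dcone_succ hA hB hAB n, sphereCard]
    simp [hqdef]
  have hf1 : fk (dcone a b) 1 = 0 := by
    rw [hfs 0, FGaux2.uc_zero hBA]; simp
  -- key pointwise identity for n ≥ 2
  have hkey : ∀ n : ℕ, fk (dcone a b) (n + 2) * t ^ (n + 2)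
      = (1 / (4 * (m:ℝ)^2) * t^2) * t ^ n + (q / (4 * (m:ℝ)^2) * s^2) * s ^ n := by
    intro n
    rw [show n + 2 = (n + 1) + 1 from rfl, hfs (n + 1)]
    have hqpow : q ^ (n + 1) ≠ 0 := pow_ne_zero _ hq0
    have hval : (FGaux2.uc A B (n+1) : ℝ) = (q ^ (n+1) - (-1:ℝ) ^ (n+1)) / (2 * m) := by
      field_simp
      linarith [hcount (n + 1)]
    rw [hval, hsdef, div_pow, neg_pow]
    field_simp
    have hqn : q ^ n * q⁻¹ ^ n = 1 := by rw [← mul_pow, mul_inv_cancel₀ hq0, one_pow]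
    linear_combination (-(q * t ^ 2 * t ^ n * (-1) ^ n * 4)) * hqn
  -- summability
  have hst : Summable (fun k : ℕ => t ^ k) := summable_geometric_of_norm_lt_one htabs
  have hss : Summable (fun k : ℕ => s ^ k) := summable_geometric_of_norm_lt_one hsabs
  have hg1 : Summable (fun k : ℕ => (1 / (4 * (m:ℝ)^2) * t^2) * t ^ k) := hst.mul_left _
  have hg2 : Summable (fun k : ℕ => (q / (4 * (m:ℝ)^2) * s^2) * s ^ k) := hss.mul_left _
  have hfun : (fun k : ℕ => fk (dcone a b) (k + 2) * t ^ (k + 2))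
      = fun k : ℕ => (1 / (4 * (m:ℝ)^2) * t^2) * t ^ k + (q / (4 * (m:ℝ)^2) * s^2) * s ^ k :=
    funext hkey
  have hsum2 : Summable (fun k : ℕ => fk (dcone a b) (k + 2) * t ^ (k + 2)) := by
    rw [hfun]; exact hg1.add hg2
  have hsumG : Summable (fun k : ℕ => fk (dcone a b) k * t ^ k) :=
    (summable_nat_add_iff 2).1 hsum2
  have hsum1 : Summable (fun k : ℕ => fk (dcone a b) (k + 1) * t ^ (k + 1)) :=
    (summable_nat_add_iff 1).2 hsumG
  have hval2 : ∑' k : ℕ, fk (dcone a b) (k + 2) * t ^ (k + 2)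
      = (1 / (4*(m:ℝ)^2) * t^2) * (1 - t)⁻¹ + (q / (4*(m:ℝ)^2) * s^2) * (1 - s)⁻¹ := by
    rw [hfun, Summable.tsum_add hg1 hg2, tsum_mul_left, tsum_mul_left,
      tsum_geometric_of_norm_lt_one htabs, tsum_geometric_of_norm_lt_one hsabs]
  have hmain : genFun (dcone a b) t = ∑' k : ℕ, fk (dcone a b) (k + 2) * t ^ (k + 2) := by
    rw [genFun, Summable.tsum_eq_zero_add hsumG, Summable.tsum_eq_zero_add hsum1]
    norm_num [hf0, hf1]
  rw [hmain, hval2, hsdef]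
  have hqt' : q + t ≠ 0 := ne_of_gt hqt
  rw [show (1:ℝ) - -t / q = (q + t) / q by field_simp; ring]
  field_simp
end
end

section
/- Let F be the free group of rank m ≥ 2 and let a ∈ Σ. Then for all real t ∈ (−1,1): g_{C(a,a)}(t) = t²/(4m²(1−t)) + t²/(4m²(2m−1+t)) + t³/(2m((2m−1)²−t²)). -/
open Filter Set

noncomputable section

namespace Stmt15Aux

open List

variable {β : Type*} [DecidableEq β] [Fintype β]

/-- relation expressing that consecutive letters do not cancel -/
def NC (x y : β × Bool) : Prop := ¬(x.1 = y.1 ∧ x.2 = !y.2)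

instance : DecidableRel (NC (β := β)) := fun x y => by unfold NC; infer_instance

/-- a word is reduced iff no adjacent cancelling pair -/
def IsRed (L : List (β × Bool)) : Prop := List.Chain' NC L

instance : DecidablePred (IsRed (β := β)) := fun L => by unfold IsRed; exact inferInstanceAs (Decidable (List.IsChain NC L))

theorem reduce_eq_self {L : List (β × Bool)} (h : IsRed L) : FreeGroup.reduce L = L := by
  induction L with
  | nil => rfl
  | cons x L ih =>
    have hL : IsRed L := h.tail
    rw [FreeGroup.reduce.cons, ih hL]
    cases L with
    | nil => rfl
    | cons hd tl =>
      have hnc : NC x hd := (List.isChain_cons_cons.1 h).1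
      simp only [List.casesOn]
      exact if_neg hnc

theorem isRed_reduce (L : List (β × Bool)) : IsRed (FreeGroup.reduce L) := by
  induction L with
  | nil => exact List.isChain_nil
  | cons x L ih =>
    rw [FreeGroup.reduce.cons]
    cases hr : FreeGroup.reduce L with
    | nil => exact List.isChain_singleton x
    | cons hd tl =>
      rw [hr] at ih
      by_cases hc : x.1 = hd.1 ∧ x.2 = !hd.2
      · have h' : IsRed tl := ih.tail
        simpa [hc] using h'
      · simp only [if_neg hc]
        exact List.isChain_cons_cons.2 ⟨hc, ih⟩

omit [DecidableEq β] [Fintype β] in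
theorem red_eq_of_length {L M : List (β × Bool)} (h : FreeGroup.Red L M)
    (hl : M.length = L.length) : M = L :=
  h.sublist.eq_of_length hl

theorem isRed_toWord (g : FreeGroup β) : IsRed (FreeGroup.toWord g) := by
  rw [← FreeGroup.reduce_toWord]
  exact isRed_reduce _

theorem toWord_mk_of_isRed {L : List (β × Bool)} (h : IsRed L) :
    FreeGroup.toWord (FreeGroup.mk L) = L := by
  rw [FreeGroup.toWord_mk, reduce_eq_self h]

/-- all words of length k over β × Bool -/
def allW (β : Type*) [DecidableEq β] [Fintype β] : ℕ → Finset (List (β × Bool))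
  | 0 => {[]}
  | k+1 => (Finset.univ (α := β × Bool) ×ˢ allW β k).image (fun p => p.1 :: p.2)

theorem mem_allW {k : ℕ} {L : List (β × Bool)} : L ∈ allW β k ↔ L.length = k := by
  induction k generalizing L with
  | zero => simp [allW, List.length_eq_zero_iff]
  | succ k ih =>
    simp only [allW, Finset.mem_image, Finset.mem_product, Finset.mem_univ, true_and]
    constructor
    · rintro ⟨⟨x, M⟩, hM, rfl⟩; simp [ih.1 hM]
    · intro hL
      cases L with
      | nil => simp at hL
      | cons x M => exact ⟨(x, M), ih.2 (by simpa using hL), rfl⟩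

/-- reduced words of length k with given first and last letters -/
def Cw (y z : β × Bool) (k : ℕ) : Finset (List (β × Bool)) :=
  (allW β k).filter (fun L => IsRed L ∧ L.head? = some y ∧ L.getLast? = some z)

theorem mem_Cw {y z : β × Bool} {k : ℕ} {L : List (β × Bool)} :
    L ∈ Cw y z k ↔ L.length = k ∧ IsRed L ∧ L.head? = some y ∧ L.getLast? = some z := by
  simp [Cw, mem_allW]

theorem Cw_one (y z : β × Bool) : Cw y z 1 = if y = z then {[z]} else ∅ := by
  ext L
  simp only [Cw, Finset.mem_filter, mem_allW]
  constructor
  · rintro ⟨h1, h2, h3, h4⟩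
    obtain ⟨x, rfl⟩ := List.length_eq_one_iff.1 h1
    simp only [List.head?_cons, Option.some_inj] at h3
    simp only [List.getLast?_singleton, Option.some_inj] at h4
    subst h3; subst h4
    simp
  · intro h
    split_ifs at h with hyz
    · simp only [Finset.mem_singleton] at h
      subst h; subst hyz
      refine ⟨rfl, List.isChain_singleton _, rfl, rfl⟩
    · simp at h

theorem Cw_succ (y z : β × Bool) (k : ℕ) (hk : 1 ≤ k) :
    Cw y z (k+1) = (Finset.univ.filter (fun w => NC y w)).biUnion
      (fun w => (Cw w z k).image (fun L => y :: L)) := by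
  ext L
  simp only [Cw, Finset.mem_filter, mem_allW, Finset.mem_biUnion, Finset.mem_image,
    Finset.mem_univ, true_and]
  constructor
  · rintro ⟨h1, h2, h3, h4⟩
    cases L with
    | nil => simp at h1
    | cons x M =>
      simp only [List.head?_cons, Option.some_inj] at h3
      subst h3
      have hM : M ≠ [] := by
        intro h; subst h; simp at h1; omega
      obtain ⟨w, hw⟩ : ∃ w, M.head? = some w := by
        cases M with
        | nil => exact absurd rfl hM
        | cons a b => exact ⟨a, rfl⟩
      refine ⟨w, ?_, M, ⟨by simpa using h1, h2.tail, hw, ?_⟩, rfl⟩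
      · have := List.isChain_cons.1 h2
        exact this.1 w hw
      · cases M with
        | nil => exact absurd rfl hM
        | cons a b => rwa [List.getLast?_cons_cons] at h4
  · rintro ⟨w, hnc, M, ⟨h1, h2, h3, h4⟩, rfl⟩
    have hM : M ≠ [] := by intro h; subst h; simp at h1; omega
    refine ⟨by simp [h1], ?_, rfl, by cases M with
      | nil => exact absurd rfl hM
      | cons a b => rwa [List.getLast?_cons_cons]⟩
    refine List.isChain_cons.2 ⟨?_, h2⟩
    intro u hu
    rw [h3] at hu
    exact (Option.some_inj.1 hu) ▸ hnc

theorem card_Cw_succ (y z : β × Bool) (k : ℕ) (hk : 1 ≤ k) :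
    (Cw y z (k+1)).card = ∑ w ∈ Finset.univ.filter (fun w => NC y w), (Cw w z k).card := by
  rw [Cw_succ y z k hk, Finset.card_biUnion]
  · refine Finset.sum_congr rfl (fun w _ => ?_)
    exact Finset.card_image_of_injective _ (fun a b h => by simpa using h)
  · intro w1 h1 w2 h2 hne
    simp only [Finset.disjoint_left, Finset.mem_image]
    rintro L ⟨M1, hM1, rfl⟩ ⟨M2, hM2, hM⟩
    simp only [List.cons.injEq] at hM
    apply hne
    have e1 := (Finset.mem_filter.1 hM1).2.2.1
    have e2 := (Finset.mem_filter.1 hM2).2.2.1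
    rw [hM.2, e1] at e2
    exact (Option.some_inj.1 e2)

def inv (y : β × Bool) : β × Bool := (y.1, !y.2)

theorem filter_NC (y : β × Bool) :
    Finset.univ.filter (fun w => NC y w) = Finset.univ.erase (inv y) := by
  ext w
  simp only [Finset.mem_filter, Finset.mem_univ, true_and, Finset.mem_erase, and_true, NC, inv,
    Ne, Prod.ext_iff, Bool.eq_not_iff]
  exact not_congr (and_congr eq_comm ne_comm)

theorem rec_main (la y : β × Bool) (k : ℕ) (hk : 1 ≤ k) :
    (Cw y la (k+1)).card + (Cw (inv y) la k).card = ∑ z, (Cw z la k).card := by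
  rw [card_Cw_succ y la k hk, filter_NC]
  exact Finset.sum_erase_add _ _ (Finset.mem_univ _)

theorem sum_inv (f : β × Bool → ℕ) : ∑ y, f (inv y) = ∑ y, f y :=
  Fintype.sum_bijective inv (Function.Involutive.bijective (fun y => by simp [inv])) _ _
    (fun y => rfl)

theorem U_one (la : β × Bool) : ∑ z, (Cw z la 1).card = 1 := by
  have h : ∀ z : β × Bool, (Cw z la 1).card = if z = la then 1 else 0 := by
    intro z
    rw [Cw_one]
    split_ifs <;> simp
  simp only [h]
  simp

theorem U_rec (la : β × Bool) (k : ℕ) (hk : 1 ≤ k) :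
    ∑ z, (Cw z la (k+1)).card = (2 * Fintype.card β - 1) * ∑ z, (Cw z la k).card := by
  have h1 : ∑ z, ((Cw z la (k+1)).card + (Cw (inv z) la k).card)
      = ∑ z : β × Bool, ∑ w, (Cw w la k).card :=
    Finset.sum_congr rfl (fun z _ => rec_main la z k hk)
  rw [Finset.sum_add_distrib, sum_inv (fun z => (Cw z la k).card), Finset.sum_const,
    smul_eq_mul] at h1
  have hcard : (Finset.univ : Finset (β × Bool)).card = 2 * Fintype.card β := by
    simp [Fintype.card_prod, mul_comm]
  rw [hcard] at h1
  rw [Nat.sub_mul, one_mul]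
  exact Nat.eq_sub_of_add_eq h1

theorem U_formula (la : β × Bool) (j : ℕ) :
    ∑ z, (Cw z la (j+1)).card = (2 * Fintype.card β - 1) ^ j := by
  induction j with
  | zero => simpa using U_one la
  | succ j ih => rw [U_rec la (j+1) (by omega), ih]; ring

/-- closed forms for A and B, in ℝ -/
theorem AB_formula (la : β × Bool) (c : ℕ) (hc : 2 ≤ c) (hcard : Fintype.card β = c) (j : ℕ) :
    2*(c:ℝ) * ((Cw la la (j+1)).card : ℝ)
      = (2*(c:ℝ)-1)^j + (1-(c:ℝ))*(-1)^(j+1) + (c:ℝ) ∧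
    2*(c:ℝ) * ((Cw (inv la) la (j+1)).card : ℝ)
      = (2*(c:ℝ)-1)^j + (1-(c:ℝ))*(-1)^(j+1) - (c:ℝ) := by
  have hq : ((2*c-1 : ℕ) : ℝ) = 2*(c:ℝ) - 1 := by
    push_cast [Nat.cast_sub (by omega : 1 ≤ 2*c)]; ring
  induction j with
  | zero =>
    constructor
    · rw [Cw_one, if_pos rfl, Finset.card_singleton]
      push_cast; try ring
    · have hne : inv la ≠ la := by simp [inv, Prod.ext_iff]
      rw [Cw_one, if_neg hne, Finset.card_empty]
      push_cast; try ring
  | succ j ih =>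
    obtain ⟨ihA, ihB⟩ := ih
    have hU := U_formula la j
    rw [hcard] at hU
    have h1 := rec_main la la (j+1) (by omega)
    have h2' := rec_main la (inv la) (j+1) (by omega)
    rw [show inv (inv la) = la from by simp [inv]] at h2'
    rw [hU] at h1 h2'
    have c1 : ((Cw la la (j+2)).card : ℝ) + ((Cw (inv la) la (j+1)).card : ℝ)
        = (2*(c:ℝ)-1)^j := by
      rw [← hq]; exact_mod_cast congrArg (Nat.cast (R := ℝ)) h1
    have c2 : ((Cw (inv la) la (j+2)).card : ℝ) + ((Cw la la (j+1)).card : ℝ)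
        = (2*(c:ℝ)-1)^j := by
      rw [← hq]; exact_mod_cast congrArg (Nat.cast (R := ℝ)) h2'
    constructor
    · linear_combination (2*(c:ℝ)) * c1 - ihB
    · linear_combination (2*(c:ℝ)) * c2 - ihA

section dc
variable {m : ℕ} {a : FG m} {la : Fin m × Bool}

theorem glen_a (hla : FreeGroup.toWord a = [la]) : glen a = 1 := by simp [glen, hla]

theorem mem_dcone (hla : FreeGroup.toWord a = [la]) (g : FG m) :
    g ∈ dcone a a ↔ (FreeGroup.toWord g).head? = some la ∧
      (FreeGroup.toWord g).getLast? = some la ∧ 2 ≤ glen g := by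
  have hamk : a = FreeGroup.mk [la] := by
    conv_lhs => rw [← FreeGroup.mk_toWord (x := a), hla]
  constructor
  · rintro ⟨f, rfl, hlen⟩
    set L : List (Fin m × Bool) := la :: (FreeGroup.toWord f ++ [la]) with hL
    have hmkL : FreeGroup.mk L = a * f * a := by
      rw [hamk]
      conv_lhs => rw [hL]
      rw [show la :: (FreeGroup.toWord f ++ [la]) = [la] ++ FreeGroup.toWord f ++ [la] from rfl]
      rw [← FreeGroup.mul_mk, ← FreeGroup.mul_mk, FreeGroup.mk_toWord]
    have hlenL : L.length = glen (a * f * a) := by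
      have hgf : glen f = (FreeGroup.toWord f).length := rfl
      rw [hlen, glen_a hla, hgf, hL]
      simp
      omega
    have hred : FreeGroup.toWord (a * f * a) = L := by
      rw [← hmkL, FreeGroup.toWord_mk]
      refine red_eq_of_length FreeGroup.reduce.red ?_
      have hrL : FreeGroup.reduce L = FreeGroup.toWord (FreeGroup.mk L) :=
        (FreeGroup.toWord_mk).symm
      rw [hrL, hmkL]
      exact hlenL.symm
    rw [hred]
    refine ⟨rfl, ?_, ?_⟩
    · rw [show L = (la :: FreeGroup.toWord f) ++ [la] from by simp [hL]]
      exact List.getLast?_concat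
    · simp only [glen, hred, hL]
      simp
  · rintro ⟨h1, h2, h3⟩
    obtain ⟨ys, hys⟩ := List.getLast?_eq_some_iff.1 h2
    have hysne : ys ≠ [] := by
      intro h
      rw [h] at hys
      rw [glen, hys] at h3
      simp at h3
    obtain ⟨w, hw⟩ : ∃ w, ys = la :: w := by
      cases hys2 : ys with
      | nil => exact absurd hys2 hysne
      | cons x M =>
        rw [hys2] at hys
        rw [hys] at h1
        simp only [List.cons_append, List.head?_cons, Option.some_inj] at h1
        exact ⟨M, by rw [h1]⟩
    rw [hw] at hys
    refine ⟨FreeGroup.mk w, ?_, ?_⟩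
    · rw [hamk, FreeGroup.mul_mk, FreeGroup.mul_mk]
      conv_lhs => rw [← FreeGroup.mk_toWord (x := g), hys]
      rfl
    · have hredW : IsRed ((la :: w) ++ [la]) := by rw [← hys]; exact isRed_toWord g
      have hredw : IsRed w := hredW.infix ⟨[la], [la], by simp⟩
      have hg : glen (FreeGroup.mk w) = w.length := by rw [glen, toWord_mk_of_isRed hredw]
      rw [hg, glen_a hla]
      simp only [glen, hys]
      simp
      omega

theorem nk_dcone_eq (hla : FreeGroup.toWord a = [la]) (k : ℕ) (hk : 2 ≤ k) :
    nk (dcone a a) k = (Cw la la k).card := by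
  have himg : FreeGroup.toWord '' {g | g ∈ dcone a a ∧ glen g = k} = ↑(Cw la la k) := by
    ext L
    simp only [Set.mem_image, Finset.coe_sort_coe, Finset.mem_coe, mem_Cw]
    constructor
    · rintro ⟨g, ⟨hg, hk'⟩, rfl⟩
      obtain ⟨h1, h2, h3⟩ := (mem_dcone hla g).1 hg
      exact ⟨hk', isRed_toWord g, h1, h2⟩
    · rintro ⟨h1, h2, h3, h4⟩
      refine ⟨FreeGroup.mk L, ⟨?_, ?_⟩, toWord_mk_of_isRed h2⟩
      · rw [mem_dcone hla]
        rw [toWord_mk_of_isRed h2]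
        exact ⟨h3, h4, by rw [glen, toWord_mk_of_isRed h2]; omega⟩
      · rw [glen, toWord_mk_of_isRed h2]; exact h1
  have hinj := Set.ncard_image_of_injective {g | g ∈ dcone a a ∧ glen g = k}
    (FreeGroup.toWord_injective (α := Fin m))
  rw [himg] at hinj
  rw [nk, ← hinj, Set.ncard_coe_finset]

theorem nk_dcone_small (hla : FreeGroup.toWord a = [la]) (k : ℕ) (hk : k < 2) :
    nk (dcone a a) k = 0 := by
  have hset : {g ∈ dcone a a | glen g = k} = (∅ : Set (FG m)) := by
    ext g
    simp only [Set.mem_setOf_eq, Set.mem_empty_iff_false, iff_false, not_and]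
    intro hg hgl
    obtain ⟨-, -, h3⟩ := (mem_dcone hla g).1 hg
    omega
  rw [nk, hset, Set.ncard_empty]

end dc
end Stmt15Aux

/-- the generating function of `C(a,a)` for a letter `a`. -/
theorem stmt15 {m : ℕ} (hm : 2 ≤ m) (a : FG m) (ha : glen a = 1) :
    ∀ t ∈ Set.Ioo (-1 : ℝ) 1,
      genFun (dcone a a) t
        = t ^ 2 / (4 * (m : ℝ) ^ 2 * (1 - t))
          + t ^ 2 / (4 * (m : ℝ) ^ 2 * (2 * (m : ℝ) - 1 + t))
          + t ^ 3 / (2 * (m : ℝ) * ((2 * (m : ℝ) - 1) ^ 2 - t ^ 2)) := by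
  classical
  obtain ⟨la, hla⟩ := List.length_eq_one_iff.1 ha
  rintro t ⟨ht1, ht2⟩
  have hmR : (2:ℝ) ≤ (m:ℝ) := by exact_mod_cast hm
  have hm0 : (m:ℝ) ≠ 0 := by positivity
  have hqpos : (0:ℝ) < 2*(m:ℝ) - 1 := by linarith
  have hq3 : (3:ℝ) ≤ 2*(m:ℝ) - 1 := by linarith
  have hq0 : (2*(m:ℝ) - 1) ≠ 0 := ne_of_gt hqpos
  set q : ℝ := 2*(m:ℝ) - 1 with hqdef
  set c1 : ℝ := 1/(4*(m:ℝ)^2) with hc1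
  set c2 : ℝ := (1-(m:ℝ))*q/(4*(m:ℝ)^2) with hc2
  set c3 : ℝ := q/(4*(m:ℝ)) with hc3
  set G : ℕ → ℝ := fun k => c1 * t^k + c2 * (-t/q)^k + c3 * (t/q)^k with hG
  -- fk values
  have hfk0 : fk (dcone a a) 0 = 0 := by
    simp [fk, Stmt15Aux.nk_dcone_small hla 0 (by norm_num)]
  have hfk1 : fk (dcone a a) 1 = 0 := by
    simp [fk, Stmt15Aux.nk_dcone_small hla 1 (by norm_num)]
  have hfk2 : ∀ j : ℕ, fk (dcone a a) (j+2) * t^(j+2) = G (j+2) := by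
    intro j
    have hA := (Stmt15Aux.AB_formula la m hm (by simp) (j+1)).1
    have hnk : nk (dcone a a) (j+2) = (Stmt15Aux.Cw la la (j+2)).card :=
      Stmt15Aux.nk_dcone_eq hla _ (by omega)
    have hcardval : (((Stmt15Aux.Cw la la (j+2)).card : ℕ) : ℝ)
        = (q^(j+1) + (1-(m:ℝ))*(-1)^(j+2) + (m:ℝ))/(2*(m:ℝ)) := by
      rw [eq_div_iff (by positivity)]
      linarith [hA]
    have hsph : sphereCard m (j+2) = 2*(m:ℝ) * q^(j+1) := by
      simp [sphereCard, hqdef]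
    rw [fk, hnk, hcardval, hsph]
    simp only [hG]
    have hneg : (-t/q)^(j+2) = (-1)^(j+2) * t^(j+2) / q^(j+2) := by
      rw [div_pow, neg_pow]
      try ring
    have hdiv : (t/q)^(j+2) = t^(j+2) / q^(j+2) := div_pow t q (j+2)
    rw [hneg, hdiv, hc1, hc2, hc3]
    have hqp : q^(j+1) ≠ 0 := pow_ne_zero _ hq0
    have hqp2 : q^(j+2) ≠ 0 := pow_ne_zero _ hq0
    field_simp
    ring
  -- summability
  have hnt : ‖t‖ < 1 := by rw [Real.norm_eq_abs, abs_lt]; exact ⟨ht1, ht2⟩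
  have habs : |t| < 1 := abs_lt.2 ⟨ht1, ht2⟩
  have hnt2 : ‖-t/q‖ < 1 := by
    rw [Real.norm_eq_abs, abs_div, abs_neg, abs_of_pos hqpos, div_lt_one hqpos]
    linarith
  have hnt3 : ‖t/q‖ < 1 := by
    rw [Real.norm_eq_abs, abs_div, abs_of_pos hqpos, div_lt_one hqpos]
    linarith
  have hs1 : Summable (fun k : ℕ => c1 * t^k) :=
    (summable_geometric_of_norm_lt_one hnt).mul_left c1
  have hs2 : Summable (fun k : ℕ => c2 * (-t/q)^k) :=
    (summable_geometric_of_norm_lt_one hnt2).mul_left c2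
  have hs3 : Summable (fun k : ℕ => c3 * (t/q)^k) :=
    (summable_geometric_of_norm_lt_one hnt3).mul_left c3
  have hsG : Summable G := by
    rw [hG]
    exact (hs1.add hs2).add hs3
  have hs0' : Summable (fun k : ℕ => if k = 0 then G 0 else 0) :=
    (hasSum_ite_eq 0 (G 0)).summable
  have hs1' : Summable (fun k : ℕ => if k = 1 then G 1 else 0) :=
    (hasSum_ite_eq 1 (G 1)).summable
  -- pointwise identity
  have hpt : (fun k : ℕ => fk (dcone a a) k * t^k)
      = fun k : ℕ => (G k - (if k = 0 then G 0 else 0)) - (if k = 1 then G 1 else 0) := by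
    funext k
    match k with
    | 0 => simp [hfk0]
    | 1 => simp [hfk1]
    | (j+2) => simp [hfk2 j]
  have hgen : genFun (dcone a a) t = (∑' k, G k) - G 0 - G 1 := by
    rw [genFun, hpt, Summable.tsum_sub (hsG.sub hs0') hs1', Summable.tsum_sub hsG hs0',
      (hasSum_ite_eq 0 (G 0)).tsum_eq, (hasSum_ite_eq 1 (G 1)).tsum_eq]
  have htG : ∑' k, G k = c1 * (1-t)⁻¹ + c2 * (1-(-t/q))⁻¹ + c3 * (1-t/q)⁻¹ := by
    rw [hG, Summable.tsum_add (hs1.add hs2) hs3, Summable.tsum_add hs1 hs2, tsum_mul_left, tsum_mul_left,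
      tsum_mul_left, tsum_geometric_of_norm_lt_one hnt, tsum_geometric_of_norm_lt_one hnt2,
      tsum_geometric_of_norm_lt_one hnt3]
  have hG0 : G 0 = c1 + c2 + c3 := by simp [hG]
  have hG1 : G 1 = c1 * t + c2 * (-t/q) + c3 * (t/q) := by simp [hG]
  rw [hgen, htG, hG0, hG1, hc1, hc2, hc3]
  have h1t : (1:ℝ) - t ≠ 0 := by intro h; linarith [sub_eq_zero.1 h]
  have hqt1 : q + t ≠ 0 := by intro h; rw [hqdef] at h; linarith [eq_neg_of_add_eq_zero_left h]
  have hqt2 : q - t ≠ 0 := by intro h; rw [hqdef] at h; linarith [sub_eq_zero.1 h]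
  have hqsq : q^2 - t^2 ≠ 0 := by
    intro h
    have : (q - t) * (q + t) = 0 := by linear_combination h
    rcases mul_eq_zero.1 this with h' | h'
    · exact hqt2 h'
    · exact hqt1 h'
  have h1mt : (1:ℝ) - (-t/q) ≠ 0 := by
    rw [show (1:ℝ) - (-t/q) = (q+t)/q from by field_simp; try ring]
    exact div_ne_zero hqt1 hq0
  have h1mt' : (1:ℝ) - t/q ≠ 0 := by
    rw [show (1:ℝ) - t/q = (q-t)/q from by field_simp]
    exact div_ne_zero hqt2 hq0
  rw [hqdef] at *
  have hq0' : (2*(m:ℝ)-1) ≠ 0 := hq0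
  generalize hQ : 2*(m:ℝ)-1 = Q at hq0' hqt1 hqt2 hqsq ⊢
  have hqt1' : Q - -t ≠ 0 := by rwa [sub_neg_eq_add]
  field_simp
  subst hQ
  ring
end
end

section
/- Let F be the free group of rank m ≥ 2 and let a ∈ Σ. Then for all real t ∈ (−1,1): g_{C(a,a^{-1})}(t) = t²/(4m²(1−t)) + t²/(4m²(2m−1+t)) − (2m−1)t²/(2m((2m−1)²−t²)). -/
open Filter Set

noncomputable section

namespace S16
variable {m : ℕ}

abbrev Ltr (m : ℕ) := Fin m × Bool

def linv (x : Ltr m) : Ltr m := (x.1, !x.2)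

@[simp] lemma linv_linv (x : Ltr m) : linv (linv x) = x := by simp [linv]

lemma linv_ne (x : Ltr m) : linv x ≠ x := by
  simp [linv, Prod.ext_iff]

lemma linv_eq_iff {x y : Ltr m} : x = linv y ↔ y = linv x := by
  constructor <;> (rintro rfl; simp)

def Rel : Ltr m → Ltr m → Prop := fun x y => y ≠ linv x

lemma cancel_iff (x y : Ltr m) : (x.1 = y.1 ∧ x.2 = !y.2) ↔ y = linv x := by
  obtain ⟨a, b⟩ := x; obtain ⟨c, d⟩ := y
  cases b <;> cases d <;> simp [linv, Prod.ext_iff, eq_comm]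

lemma reduce_eq_self {L : List (Ltr m)} (h : List.Chain' Rel L) :
    FreeGroup.reduce L = L := by
  induction L with
  | nil => rfl
  | cons x L ih =>
    rw [FreeGroup.reduce.cons, ih h.tail]
    cases L with
    | nil => rfl
    | cons y t =>
      have hr : Rel x y := (List.isChain_cons_cons.mp h).1
      have : ¬(x.1 = y.1 ∧ x.2 = !y.2) := fun hc => hr ((cancel_iff x y).mp hc)
      simp only [this, if_false]

lemma chain'_reduce (L : List (Ltr m)) : List.Chain' Rel (FreeGroup.reduce L) := by
  induction L with
  | nil => exact List.isChain_nil
  | cons x L ih =>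
    rw [FreeGroup.reduce.cons]
    cases hr : FreeGroup.reduce L with
    | nil => exact List.isChain_singleton _
    | cons y t =>
      rw [hr] at ih
      dsimp only
      split_ifs with hc
      · exact ih.tail
      · exact List.isChain_cons_cons.mpr ⟨fun hy => hc ((cancel_iff x y).mpr hy), ih⟩

lemma chain'_toWord (g : FG m) : List.Chain' Rel g.toWord := by
  rw [← FreeGroup.reduce_toWord]; exact chain'_reduce _

lemma glen_mk {w : List (Ltr m)} (h : List.Chain' Rel w) :
    glen (FreeGroup.mk w) = w.length := by
  unfold glen; rw [FreeGroup.toWord_mk, reduce_eq_self h]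

lemma toWord_mk_chain' {w : List (Ltr m)} (h : List.Chain' Rel w) :
    (FreeGroup.mk w).toWord = w := by
  rw [FreeGroup.toWord_mk, reduce_eq_self h]

lemma glen_inv (g : FG m) : glen g⁻¹ = glen g := by
  unfold glen; rw [FreeGroup.toWord_inv, FreeGroup.invRev_length]

lemma inv_mk_single (α : Ltr m) : (FreeGroup.mk [α])⁻¹ = FreeGroup.mk [linv α] := by
  rw [FreeGroup.inv_mk]; simp [FreeGroup.invRev, linv]

/-- word-level characterization of the cone slices -/
lemma dcone_slice (a : FG m) (α : Ltr m) (hα : a.toWord = [α]) (k : ℕ) :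
    {g ∈ dcone a a⁻¹ | glen g = k}
      = FreeGroup.mk '' {w : List (Ltr m) | List.Chain' Rel w ∧ w.length = k ∧
          w.head? = some α ∧ w.getLast? = some (linv α)} := by
  have hamk : a = FreeGroup.mk [α] := by rw [← hα, FreeGroup.mk_toWord]
  have hainv : a⁻¹ = FreeGroup.mk [linv α] := by rw [hamk, inv_mk_single]
  have hga : glen a = 1 := by unfold glen; rw [hα]; rfl
  ext g
  constructor
  · rintro ⟨⟨f, rfl, hlen⟩, hk⟩
    set g := a * f * a⁻¹ with hg
    have hL : g = FreeGroup.mk (([α] ++ f.toWord) ++ [linv α]) := by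
      rw [hg, hamk, inv_mk_single]
      nth_rewrite 1 [← FreeGroup.mk_toWord (x := f)]
      rw [FreeGroup.mul_mk, FreeGroup.mul_mk]
    have hred : g.toWord = ([α] ++ f.toWord) ++ [linv α] := by
      have h1 : g.toWord = FreeGroup.reduce (([α] ++ f.toWord) ++ [linv α]) := by
        rw [hL, FreeGroup.toWord_mk]
      have hsub : List.Sublist (FreeGroup.reduce (([α] ++ f.toWord) ++ [linv α]))
          (([α] ++ f.toWord) ++ [linv α]) := (FreeGroup.reduce.red).sublist
      have hlen2 : g.toWord.length = (([α] ++ f.toWord) ++ [linv α]).length := by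
        have h2 : glen g = 1 + glen f + 1 := by rw [hlen, hga, glen_inv, hga]
        simp only [glen] at h2
        simp only [List.length_append, List.length_cons, List.length_nil]
        omega
      rw [h1]
      exact hsub.eq_of_length (by rw [← h1, hlen2])
    refine ⟨g.toWord, ⟨chain'_toWord g, ?_, ?_, ?_⟩, FreeGroup.mk_toWord⟩
    · exact hk
    · rw [hred]; rfl
    · rw [hred, List.getLast?_concat]
  · rintro ⟨w, ⟨hch, hlen, hhead, hlast⟩, rfl⟩
    obtain ⟨v, rfl⟩ := List.getLast?_eq_some_iff.mp hlast
    cases v with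
    | nil =>
      exfalso
      simp only [List.nil_append, List.head?_cons] at hhead
      exact linv_ne α (by injection hhead)
    | cons c v₁ =>
      have hc : c = α := by
        simp only [List.cons_append, List.head?_cons] at hhead
        injection hhead
      subst hc
      have hch1 : List.Chain' Rel v₁ := (List.isChain_append.mp hch.tail).1
      refine ⟨⟨FreeGroup.mk v₁, ?_, ?_⟩, (glen_mk hch).trans hlen⟩
      · rw [hamk, inv_mk_single, FreeGroup.mul_mk, FreeGroup.mul_mk]
        rfl
      · rw [glen_mk hch, glen_mk hch1, hga, glen_inv, hga]
        simp; omega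

/-- Finset of reduced words of length `k` starting with `α` and ending with `y`. -/
def W (α : Ltr m) : ℕ → Ltr m → Finset (List (Ltr m))
  | 0, _ => ∅
  | 1, y => if y = α then {[α]} else ∅
  | (k+2), y => Finset.univ.biUnion fun z =>
      if z = linv y then ∅ else (W α (k+1) z).image (· ++ [y])

lemma mem_W (α : Ltr m) : ∀ (k : ℕ) (y : Ltr m) (w : List (Ltr m)),
    w ∈ W α k y ↔ (List.Chain' Rel w ∧ w.length = k ∧
      w.head? = some α ∧ w.getLast? = some y) := by
  intro k
  induction k using Nat.strong_induction_on with
  | _ k ih =>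
    match k with
    | 0 =>
      intro y w
      simp only [W, Finset.notMem_empty, false_iff]
      rintro ⟨-, hl, hh, -⟩
      rw [List.length_eq_zero_iff.mp hl] at hh
      simp at hh
    | 1 =>
      intro y w
      constructor
      · intro hw
        simp only [W] at hw
        split_ifs at hw with hy
        · subst hy
          simp only [Finset.mem_singleton] at hw
          subst hw
          exact ⟨List.isChain_singleton _, rfl, rfl, rfl⟩
        · simp at hw
      · rintro ⟨-, hl, hh, hla⟩
        obtain ⟨c, rfl⟩ := List.length_eq_one_iff.mp hl
        simp only [List.head?_cons, Option.some.injEq] at hh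
        simp only [List.getLast?_singleton, Option.some.injEq] at hla
        subst hh; subst hla
        simp [W]
    | (k+2) =>
      intro y w
      have IH := ih (k+1) (by omega)
      constructor
      · intro hw
        simp only [W, Finset.mem_biUnion, Finset.mem_univ, true_and] at hw
        obtain ⟨z, hzw⟩ := hw
        split_ifs at hzw with hz
        · simp at hzw
        · simp only [Finset.mem_image] at hzw
          obtain ⟨v, hv, rfl⟩ := hzw
          obtain ⟨hch, hlen, hh, hla⟩ := (IH z v).mp hv
          have hvne : v ≠ [] := by intro h; rw [h] at hlen; simp at hlen
          refine ⟨?_, by simp [hlen], ?_, List.getLast?_concat⟩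
          · refine List.isChain_append.mpr ⟨hch, List.isChain_singleton _, ?_⟩
            intro x hx u hu
            rw [hla] at hx
            simp only [List.head?_cons, Option.mem_def, Option.some.injEq] at hx hu
            subst hx; subst hu
            exact fun h => hz (linv_eq_iff.mp h)
          · cases v with
            | nil => exact absurd rfl hvne
            | cons c t => simpa using hh
      · rintro ⟨hch, hlen, hh, hla⟩
        obtain ⟨v, rfl⟩ := List.getLast?_eq_some_iff.mp hla
        have hvlen : v.length = k + 1 := by
          simp only [List.length_append, List.length_cons, List.length_nil] at hlen
          omega
        have hvne : v ≠ [] := by intro h; rw [h] at hvlen; simp at hvlen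
        obtain ⟨z, hz⟩ : ∃ z, v.getLast? = some z := by
          cases hv : v.getLast? with
          | none => exact absurd (List.getLast?_eq_none_iff.mp hv) hvne
          | some z => exact ⟨z, rfl⟩
        have hsplit := List.isChain_append.mp hch
        have hrel : Rel z y := hsplit.2.2 z hz y rfl
        simp only [W, Finset.mem_biUnion, Finset.mem_univ, true_and]
        refine ⟨z, ?_⟩
        rw [if_neg (fun h => hrel (linv_eq_iff.mp h))]
        simp only [Finset.mem_image]
        refine ⟨v, (IH z v).mpr ⟨hsplit.1, hvlen, ?_, hz⟩, rfl⟩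
        cases v with
        | nil => exact absurd rfl hvne
        | cons c t => simpa using hh

/-- count as an integer -/
def pZ (α : Ltr m) (k : ℕ) (y : Ltr m) : ℤ := ((W α k y).card : ℤ)

def TZ (α : Ltr m) (k : ℕ) : ℤ := ∑ z : Ltr m, pZ α k z

lemma pZ_one (α y : Ltr m) : pZ α 1 y = if y = α then 1 else 0 := by
  simp [pZ, W, apply_ite Finset.card, apply_ite (Nat.cast : ℕ → ℤ)]

lemma pZ_succ (α : Ltr m) (k : ℕ) (y : Ltr m) :
    pZ α (k+2) y = TZ α (k+1) - pZ α (k+1) (linv y) := by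
  classical
  have hdisj : ∀ z₁ ∈ (Finset.univ : Finset (Ltr m)), ∀ z₂ ∈ Finset.univ, z₁ ≠ z₂ →
      Disjoint (if z₁ = linv y then ∅ else (W α (k+1) z₁).image (· ++ [y]))
               (if z₂ = linv y then ∅ else (W α (k+1) z₂).image (· ++ [y])) := by
    intro z₁ _ z₂ _ hne
    split_ifs with h1 h2 h2 <;> try simp
    rw [Finset.disjoint_left]
    intro w hw1 hw2
    simp only [Finset.mem_image] at hw1 hw2
    obtain ⟨v₁, hv₁, he₁⟩ := hw1
    obtain ⟨v₂, hv₂, he₂⟩ := hw2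
    have hv : v₁ = v₂ := by
      have := he₁.trans he₂.symm
      simpa using this
    subst hv
    have h₁ := ((mem_W α (k+1) z₁ v₁).mp hv₁).2.2.2
    have h₂ := ((mem_W α (k+1) z₂ v₁).mp hv₂).2.2.2
    rw [h₁] at h₂
    exact hne (by injection h₂)
  have hcard : (W α (k+2) y).card
      = ∑ z : Ltr m, (if z = linv y then ∅ else (W α (k+1) z).image (· ++ [y])).card :=
    Finset.card_biUnion hdisj
  have himg : ∀ z : Ltr m, ((W α (k+1) z).image (· ++ [y])).card = (W α (k+1) z).card := by
    intro z
    apply Finset.card_image_of_injective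
    intro v₁ v₂ h
    simpa using h
  have hsplit : ∀ z : Ltr m,
      ((if z = linv y then (∅ : Finset (List (Ltr m))) else (W α (k+1) z).image (· ++ [y])).card : ℤ)
        = pZ α (k+1) z - (if z = linv y then pZ α (k+1) z else 0) := by
    intro z
    split_ifs with h
    · simp
    · rw [himg z]; simp [pZ]
  have hcast : ((W α (k+2) y).card : ℤ) = ∑ z : Ltr m,
      ((if z = linv y then (∅ : Finset (List (Ltr m))) else (W α (k+1) z).image (· ++ [y])).card : ℤ) := by
    rw [hcard]; push_cast; rfl
  rw [show pZ α (k+2) y = ((W α (k+2) y).card : ℤ) from rfl, hcast,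
    Finset.sum_congr rfl fun z _ => hsplit z, Finset.sum_sub_distrib,
    Finset.sum_ite_eq' Finset.univ (linv y) (pZ α (k+1)), if_pos (Finset.mem_univ _)]
  rfl

lemma TZ_one (α : Ltr m) : TZ α 1 = 1 := by
  unfold TZ
  simp only [pZ_one]
  rw [Finset.sum_ite_eq' Finset.univ α (fun _ => (1:ℤ))]
  simp

lemma sum_linv (f : Ltr m → ℤ) : ∑ z : Ltr m, f (linv z) = ∑ z : Ltr m, f z :=
  Function.Bijective.sum_comp (Function.Involutive.bijective (fun x => linv_linv x)) f

lemma card_Ltr : Fintype.card (Ltr m) = 2 * m := by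
  simp [Fintype.card_prod, Nat.mul_comm]

lemma TZ_succ (α : Ltr m) (k : ℕ) : TZ α (k+2) = (2 * m - 1) * TZ α (k+1) := by
  unfold TZ
  simp only [pZ_succ]
  rw [Finset.sum_sub_distrib]
  rw [sum_linv (pZ α (k+1))]
  rw [Finset.sum_const]
  rw [Finset.card_univ, card_Ltr]
  unfold TZ
  push_cast
  ring

lemma triple (α : Ltr m) (k : ℕ) :
    TZ α (k+1) = (2*m-1)^k ∧
    pZ α (k+1) α - pZ α (k+1) (linv α) = 1 ∧
    (m:ℤ) * (pZ α (k+1) α + pZ α (k+1) (linv α)) = (2*m-1)^k + (1-m)*(-1:ℤ)^(k+1) := by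
  induction k with
  | zero =>
    refine ⟨by simpa using TZ_one α, ?_, ?_⟩
    · rw [pZ_one, pZ_one, if_pos rfl, if_neg (linv_ne α)]; ring
    · rw [pZ_one, pZ_one, if_pos rfl, if_neg (linv_ne α)]
      ring
  | succ k ihk =>
    obtain ⟨hT, hd, hs⟩ := ihk
    refine ⟨by rw [TZ_succ, hT]; ring, ?_, ?_⟩
    · rw [pZ_succ, pZ_succ, linv_linv]
      linarith
    · rw [pZ_succ, pZ_succ, linv_linv, hT]
      linear_combination (-1 : ℤ) * hs

lemma nk_eq_card (a : FG m) (α : Ltr m) (hα : a.toWord = [α]) (k : ℕ) :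
    (nk (dcone a a⁻¹) k : ℤ) = pZ α k (linv α) := by
  have hset : {w : List (Ltr m) | List.Chain' Rel w ∧ w.length = k ∧
      w.head? = some α ∧ w.getLast? = some (linv α)} = ↑(W α k (linv α)) := by
    ext w
    rw [Finset.mem_coe, mem_W]
    rfl
  have hinj : Set.InjOn (FreeGroup.mk : List (Ltr m) → FG m) ↑(W α k (linv α)) := by
    intro w₁ h₁ w₂ h₂ he
    have c₁ := ((mem_W α k (linv α) w₁).mp h₁).1
    have c₂ := ((mem_W α k (linv α) w₂).mp h₂).1
    rw [← toWord_mk_chain' c₁, ← toWord_mk_chain' c₂, he]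
  unfold nk
  rw [dcone_slice a α hα k, hset, Set.ncard_image_of_injOn hinj, Set.ncard_coe_finset]
  rfl

lemma analytic_main {m : ℕ} (hm : 2 ≤ m) (R : Set (FG m))
    (h0 : nk R 0 = 0)
    (hv : ∀ k : ℕ, (2*(m:ℝ)) * (nk R (k+1) : ℝ)
      = (2*(m:ℝ)-1)^k + (1-(m:ℝ))*(-1:ℝ)^(k+1) - m)
    (t : ℝ) (ht : t ∈ Set.Ioo (-1:ℝ) 1) :
    genFun R t
        = t ^ 2 / (4 * (m : ℝ) ^ 2 * (1 - t))
          + t ^ 2 / (4 * (m : ℝ) ^ 2 * (2 * (m : ℝ) - 1 + t))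
          - (2 * (m : ℝ) - 1) * t ^ 2
            / (2 * (m : ℝ) * ((2 * (m : ℝ) - 1) ^ 2 - t ^ 2)) := by
  obtain ⟨ht1, ht2⟩ := ht
  have hmR : (2:ℝ) ≤ (m:ℝ) := by exact_mod_cast hm
  set q : ℝ := 2*(m:ℝ) - 1 with hqdef
  have hq3 : (3:ℝ) ≤ q := by simp [hqdef]; linarith
  have hm0 : (0:ℝ) < m := by linarith
  set A : ℝ := 1/(4*(m:ℝ)^2) with hA
  set B : ℝ := (1-(m:ℝ))*q/(4*(m:ℝ)^2) with hB
  set C : ℝ := -q/(4*(m:ℝ)) with hC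
  set G : ℕ → ℝ := fun k => A*t^k + B*(-t/q)^k + C*(t/q)^k with hG
  have h1 : ‖t‖ < 1 := by rw [Real.norm_eq_abs, abs_lt]; exact ⟨ht1, ht2⟩
  have habs : |t| < 1 := abs_lt.mpr ⟨ht1, ht2⟩
  have hq0 : q ≠ 0 := by linarith
  have h2 : ‖t/q‖ < 1 := by
    rw [Real.norm_eq_abs, abs_div, abs_of_pos (by linarith : (0:ℝ) < q)]
    rw [div_lt_one (by linarith)]
    linarith
  have h3 : ‖-t/q‖ < 1 := by rw [neg_div, norm_neg]; exact h2
  have S1 : Summable (fun k : ℕ => t^k) := summable_geometric_of_norm_lt_one h1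
  have S2 : Summable (fun k : ℕ => (-t/q)^k) := summable_geometric_of_norm_lt_one h3
  have S3 : Summable (fun k : ℕ => (t/q)^k) := summable_geometric_of_norm_lt_one h2
  have SG : Summable G := ((S1.mul_left A).add (S2.mul_left B)).add (S3.mul_left C)
  have hqpow : ∀ j : ℕ, (q:ℝ)^j ≠ 0 := fun j => pow_ne_zero j hq0
  have hfk : ∀ j : ℕ, fk R (j+1) * t^(j+1) = G (j+1) := by
    intro j
    have hsc : sphereCard m (j+1) = 2*(m:ℝ)*q^j := by simp [sphereCard, hqdef]
    have hnk : (nk R (j+1) : ℝ) = (q^j + (1-(m:ℝ))*(-1:ℝ)^(j+1) - m)/(2*m) := by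
      rw [eq_div_iff (by positivity : (2*(m:ℝ)) ≠ 0)]
      rw [mul_comm]
      exact hv j
    have e1 : (-t/q)^(j+1) = (-1:ℝ)^(j+1) * t^(j+1) / (q * q^j) := by
      rw [div_pow, neg_pow t, pow_succ q j]
      ring
    have e2 : (t/q)^(j+1) = t^(j+1) / (q * q^j) := by
      rw [div_pow, pow_succ q j]
      ring
    rw [hG]
    simp only [fk, hsc, hnk, e1, e2, hA, hB, hC]
    field_simp
    ring
  have hfk0 : fk R 0 * t^0 = 0 := by simp [fk, h0]
  have Sshift : Summable (fun n : ℕ => G (n+1)) := (summable_nat_add_iff 1).mpr SG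
  have Sh : Summable (fun k : ℕ => fk R k * t^k) :=
    (summable_nat_add_iff 1).mp (Sshift.congr fun n => (hfk n).symm)
  have hgen : genFun R t = (∑' k, G k) - G 0 := by
    rw [genFun, Summable.tsum_eq_zero_add Sh, hfk0, zero_add,
      tsum_congr hfk, Summable.tsum_eq_zero_add SG]
    ring
  have htsum : ∑' k, G k = A*(1-t)⁻¹ + B*(1-(-t/q))⁻¹ + C*(1-t/q)⁻¹ := by
    rw [hG]
    rw [Summable.tsum_add ((S1.mul_left A).add (S2.mul_left B)) (S3.mul_left C),
      Summable.tsum_add (S1.mul_left A) (S2.mul_left B),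
      tsum_mul_left, tsum_mul_left, tsum_mul_left,
      tsum_geometric_of_norm_lt_one h1, tsum_geometric_of_norm_lt_one h3,
      tsum_geometric_of_norm_lt_one h2]
  have hG0 : G 0 = A + B + C := by simp [hG]
  rw [hgen, htsum, hG0]
  have d1 : (1:ℝ) - t ≠ 0 := by linarith
  have d2 : q + t ≠ 0 := by linarith
  have d3 : q - t ≠ 0 := by linarith
  have d4 : (1:ℝ) - (-t/q) ≠ 0 := by
    rw [neg_div, sub_neg_eq_add]
    intro h
    have : q + t = 0 := by field_simp at h; linarith
    exact d2 this
  have d5 : (1:ℝ) - t/q ≠ 0 := by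
    intro h
    have : q - t = 0 := by field_simp at h; linarith
    exact d3 this
  have d6 : q^2 - t^2 ≠ 0 := by
    have : q^2 - t^2 = (q-t)*(q+t) := by ring
    rw [this]
    exact mul_ne_zero d3 d2
  have hmne : (m:ℝ) ≠ 0 := by linarith
  rw [hA, hB, hC, hqdef] at *
  generalize 2 * (m:ℝ) - 1 = q' at *
  have d2' : q' - -t ≠ 0 := by rw [sub_neg_eq_add]; exact d2
  field_simp
  ring

end S16

/-- the generating function of `C(a,a⁻¹)` for a letter `a`. -/
theorem stmt16 {m : ℕ} (hm : 2 ≤ m) (a : FG m) (ha : glen a = 1) :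
    ∀ t ∈ Set.Ioo (-1 : ℝ) 1,
      genFun (dcone a a⁻¹) t
        = t ^ 2 / (4 * (m : ℝ) ^ 2 * (1 - t))
          + t ^ 2 / (4 * (m : ℝ) ^ 2 * (2 * (m : ℝ) - 1 + t))
          - (2 * (m : ℝ) - 1) * t ^ 2
            / (2 * (m : ℝ) * ((2 * (m : ℝ) - 1) ^ 2 - t ^ 2)) := by
  intro t ht
  obtain ⟨α, hα⟩ := List.length_eq_one_iff.mp (ha : (FreeGroup.toWord a).length = 1)
  refine S16.analytic_main hm _ ?_ ?_ t ht
  · have h := S16.nk_eq_card a α hα 0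
    have h2 : S16.pZ α 0 (S16.linv α) = 0 := by simp [S16.pZ, S16.W]
    rw [h2] at h
    exact_mod_cast h
  · intro k
    have h := S16.nk_eq_card a α hα (k+1)
    obtain ⟨-, hd, hs⟩ := S16.triple α k
    have hZ : (2*(m:ℤ)) * ((nk (dcone a a⁻¹) (k+1) : ℤ))
        = (2*(m:ℤ)-1)^k + (1-(m:ℤ))*(-1:ℤ)^(k+1) - m := by
      rw [h]
      linear_combination hs - (m:ℤ)*hd
    exact_mod_cast hZ
end
end

section
/- Let F be the free group of rank m ≥ 2. Then for all a, b ∈ Σ (including the cases b = a and b = a^{-1}): lim_{t→1⁻} (1−t)·g_{C(a,b)}(t) = 1/(4m²). In particular every double-based cone with one-letter handles has Cesaro density 1/(4m²). -/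
open Filter Set
open Topology

noncomputable section

namespace Stmt17


open FreeGroup List

abbrev Ltr (m : ℕ) := Fin m × Bool

def inv' {m : ℕ} (x : Ltr m) : Ltr m := (x.1, !x.2)

def Rel {m : ℕ} (p q : Ltr m) : Prop := q ≠ inv' p

instance {m : ℕ} : DecidableRel (Rel (m := m)) := fun _ _ => by unfold Rel; infer_instance

lemma inv'_inv' {m : ℕ} (x : Ltr m) : inv' (inv' x) = x := by
  cases x with | mk x1 x2 => simp [inv']

lemma cond_iff {m : ℕ} (x hd : Ltr m) : (x.1 = hd.1 ∧ x.2 = !hd.2) ↔ hd = inv' x := by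
  obtain ⟨x1, x2⟩ := x; obtain ⟨h1, h2⟩ := hd
  simp only [inv', Prod.mk.injEq]
  constructor
  · rintro ⟨rfl, rfl⟩; simp
  · rintro ⟨rfl, rfl⟩; simp

lemma reduce_eq_self {m : ℕ} : ∀ {w : List (Ltr m)}, w.Chain' Rel → FreeGroup.reduce w = w := by
  intro w
  induction w with
  | nil => intro; rfl
  | cons x w ih =>
    intro h
    rw [FreeGroup.reduce.cons, ih h.tail]
    cases w with
    | nil => rfl
    | cons hd tl =>
      have hrel : Rel x hd := (List.isChain_cons_cons.mp h).1
      simp only []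
      rw [if_neg]
      intro hc
      exact hrel ((cond_iff x hd).mp hc)

lemma chain'_reduce {m : ℕ} (w : List (Ltr m)) : (FreeGroup.reduce w).Chain' Rel := by
  induction w with
  | nil => simp [List.Chain']
  | cons x w ih =>
    rw [FreeGroup.reduce.cons]
    cases h : FreeGroup.reduce w with
    | nil => simp [List.Chain']
    | cons hd tl =>
      rw [h] at ih
      by_cases hc : x.1 = hd.1 ∧ x.2 = !hd.2
      · simp only [if_pos hc]; exact ih.tail
      · simp only [if_neg hc]
        exact List.isChain_cons_cons.mpr ⟨fun he => hc ((cond_iff x hd).mpr he), ih⟩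

lemma chain'_toWord {m : ℕ} (g : FG m) : g.toWord.Chain' Rel := by
  rw [← FreeGroup.reduce_toWord]; exact chain'_reduce _

lemma toWord_mk_eq {m : ℕ} {w : List (Ltr m)} (h : w.Chain' Rel) :
    (FreeGroup.mk w).toWord = w := by
  rw [FreeGroup.toWord_mk, reduce_eq_self h]

/-- Reduced words of length `n+1` with first letter `x` and last letter `B`. -/
def Wrd {m : ℕ} (B : Ltr m) : ℕ → Ltr m → Finset (List (Ltr m))
  | 0, x => if x = B then {[x]} else ∅
  | (n+1), x =>
      (Finset.univ.filter (fun x' => Rel x x')).biUnion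
        (fun x' => (Wrd B n x').image (x :: ·))

lemma mem_Wrd {m : ℕ} (B : Ltr m) : ∀ (n : ℕ) (x : Ltr m) (w : List (Ltr m)),
    w ∈ Wrd B n x ↔
      (w.length = n + 1 ∧ w.Chain' Rel ∧ w.head? = some x ∧ w.getLast? = some B) := by
  intro n
  induction n with
  | zero =>
    intro x w
    simp only [Wrd]
    constructor
    · intro hw
      by_cases hx : x = B
      · rw [if_pos hx] at hw
        simp only [Finset.mem_singleton] at hw
        subst hw; subst hx
        simp [List.Chain']
      · rw [if_neg hx] at hw; simp at hw
    · rintro ⟨hl, _, hh, hg⟩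
      obtain ⟨c, rfl⟩ := List.length_eq_one_iff.mp hl
      have hcx : c = x := by simpa using hh
      have hcB : c = B := by simpa using hg
      simp [← hcx, ← hcB]
  | succ n ih =>
    intro x w
    simp only [Wrd, Finset.mem_biUnion, Finset.mem_filter, Finset.mem_univ, true_and,
      Finset.mem_image]
    constructor
    · rintro ⟨x', hrel, w', hw', rfl⟩
      obtain ⟨hl, hc, hh, hg⟩ := (ih x' w').mp hw'
      obtain ⟨hd, tl, rfl⟩ : ∃ hd tl, w' = hd :: tl := by
        cases w' with
        | nil => simp at hl
        | cons hd tl => exact ⟨hd, tl, rfl⟩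
      simp only [List.head?_cons, Option.some.injEq] at hh
      subst hh
      refine ⟨by simpa using hl, List.isChain_cons_cons.mpr ⟨hrel, hc⟩, rfl, ?_⟩
      rwa [List.getLast?_cons_cons]
    · rintro ⟨hl, hc, hh, hg⟩
      obtain ⟨hd, w', rfl⟩ : ∃ hd w', w = hd :: w' := by
        cases w with
        | nil => simp at hl
        | cons hd tl => exact ⟨hd, tl, rfl⟩
      simp only [List.head?_cons, Option.some.injEq] at hh
      subst hh
      obtain ⟨hd', tl', rfl⟩ : ∃ hd' tl', w' = hd' :: tl' := by
        cases w' with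
        | nil => simp at hl
        | cons hd tl => exact ⟨hd, tl, rfl⟩
      refine ⟨hd', (List.isChain_cons_cons.mp hc).1, hd' :: tl', ?_, rfl⟩
      refine (ih hd' _).mpr ⟨by simpa using hl, (List.isChain_cons_cons.mp hc).2, rfl, ?_⟩
      rwa [List.getLast?_cons_cons] at hg


lemma card_Wrd_succ {m : ℕ} (B : Ltr m) (n : ℕ) (x : Ltr m) :
    (Wrd B (n+1) x).card
      = ∑ x' ∈ Finset.univ.filter (fun x' => Rel x x'), (Wrd B n x').card := by
  rw [Wrd, Finset.card_biUnion]
  · exact Finset.sum_congr rfl fun x' _ =>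
      Finset.card_image_of_injective _ (List.cons_injective)
  · intro x₁ _ x₂ _ hne
    simp only [Finset.disjoint_left, Finset.mem_image]
    rintro w ⟨w₁, hw₁, rfl⟩ ⟨w₂, hw₂, he⟩
    have e : w₂ = w₁ := by
      injection he
    apply hne
    have h₁ : w₁.head? = some x₁ := ((mem_Wrd B n x₁ w₁).mp hw₁).2.2.1
    have h₂ : w₂.head? = some x₂ := ((mem_Wrd B n x₂ w₂).mp hw₂).2.2.1
    rw [e, h₁] at h₂
    exact (Option.some.injEq _ _ ▸ h₂)

lemma card_filter_rel {m : ℕ} (x' : Ltr m) :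
    (Finset.univ.filter (fun x => Rel x x')).card = 2 * m - 1 := by
  have he : (Finset.univ.filter (fun x : Ltr m => Rel x x'))
      = Finset.univ.erase (inv' x') := by
    ext x
    simp only [Finset.mem_filter, Finset.mem_univ, true_and, Finset.mem_erase, and_true]
    simp only [Rel]
    constructor
    · intro h hx
      exact h (by rw [hx, inv'_inv'])
    · intro h hx
      exact h (by rw [hx, inv'_inv'])
  rw [he, Finset.card_erase_of_mem (Finset.mem_univ _)]
  simp [Finset.card_univ, mul_comm]

lemma sum_card_Wrd {m : ℕ} (B : Ltr m) (n : ℕ) :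
    ∑ x : Ltr m, (Wrd B n x).card = (2 * m - 1)^n := by
  induction n with
  | zero => simp [Wrd, apply_ite Finset.card]
  | succ n ih =>
    simp only [card_Wrd_succ]
    calc ∑ x : Ltr m, ∑ x' ∈ Finset.univ.filter (fun x' => Rel x x'), (Wrd B n x').card
        = ∑ x : Ltr m, ∑ x' : Ltr m, if Rel x x' then (Wrd B n x').card else 0 := by
          simp [Finset.sum_filter]
      _ = ∑ x' : Ltr m, ∑ x : Ltr m, if Rel x x' then (Wrd B n x').card else 0 :=
          Finset.sum_comm
      _ = ∑ x' : Ltr m, (Finset.univ.filter (fun x => Rel x x')).card * (Wrd B n x').card := by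
          refine Finset.sum_congr rfl fun x' _ => ?_
          rw [← Finset.sum_filter, Finset.sum_const, smul_eq_mul]
      _ = (2*m - 1) * ∑ x' : Ltr m, (Wrd B n x').card := by
          rw [Finset.mul_sum]
          exact Finset.sum_congr rfl fun x' _ => by rw [card_filter_rel]
      _ = (2*m-1)^(n+1) := by rw [ih, pow_succ']

lemma filter_rel_eq_erase {m : ℕ} (x : Ltr m) :
    (Finset.univ.filter (fun x' : Ltr m => Rel x x')) = Finset.univ.erase (inv' x) := by
  ext x'
  simp only [Finset.mem_filter, Finset.mem_univ, true_and, Finset.mem_erase, and_true]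
  rfl

lemma card_Wrd_succ' {m : ℕ} (hm : 1 ≤ m) (B : Ltr m) (x : Ltr m) (n : ℕ) :
    ((Wrd B (n+1) x).card : ℤ)
      = (2*(m:ℤ)-1)^n - (Wrd B n (inv' x)).card := by
  have h2m : (1:ℕ) ≤ 2*m := by omega
  calc ((Wrd B (n+1) x).card : ℤ)
      = ∑ x' ∈ Finset.univ.erase (inv' x), ((Wrd B n x').card : ℤ) := by
        rw [card_Wrd_succ, filter_rel_eq_erase]; push_cast; rfl
    _ = (∑ x' : Ltr m, ((Wrd B n x').card : ℤ)) - (Wrd B n (inv' x)).card :=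
        Finset.sum_erase_eq_sub (Finset.mem_univ _)
    _ = (2*(m:ℤ)-1)^n - (Wrd B n (inv' x)).card := by
        rw [← Nat.cast_sum, sum_card_Wrd, Nat.cast_pow, Nat.cast_sub h2m]
        push_cast; ring_nf

lemma dev {m : ℕ} (hm : 1 ≤ m) (B : Ltr m) :
    ∀ (n : ℕ) (x : Ltr m),
      |2*(m:ℤ) * (Wrd B n x).card - (2*(m:ℤ)-1)^n| ≤ 2*(m:ℤ) - 1 := by
  intro n
  induction n with
  | zero =>
    intro x
    have h1 : ((Wrd B 0 x).card : ℤ) = if x = B then 1 else 0 := by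
      by_cases hx : x = B <;> simp [Wrd, hx]
    rw [h1]
    by_cases hx : x = B <;> simp [hx, abs_le]
    · rw [abs_of_nonneg (by omega)]; omega
    · omega
  | succ n ih =>
    intro x
    rw [card_Wrd_succ' hm B x n,
      show 2*(m:ℤ)*((2*(m:ℤ)-1)^n - ((Wrd B n (inv' x)).card : ℤ)) - (2*(m:ℤ)-1)^(n+1)
          = -(2*(m:ℤ) * (Wrd B n (inv' x)).card - (2*(m:ℤ)-1)^n) from by ring,
      abs_neg]
    exact ih _



lemma glen_mul_le {m : ℕ} (u v : FG m) : glen (u*v) ≤ glen u + glen v := by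
  have := (FreeGroup.toWord_mul_sublist u v).length_le
  simpa [glen] using this

lemma toWord_mul_of_glen {m : ℕ} {u v : FG m}
    (h : glen (u*v) = glen u + glen v) : (u*v).toWord = u.toWord ++ v.toWord :=
  (FreeGroup.toWord_mul_sublist u v).eq_of_length
    (by simpa [glen, List.length_append] using h)

lemma dcone_sphere {m : ℕ} {a b : FG m} {A B : Ltr m}
    (hA : a.toWord = [A]) (hB : b.toWord = [B]) (j : ℕ) :
    {g | g ∈ dcone a b ∧ glen g = j + 2} = FreeGroup.mk '' ↑(Wrd B (j+1) A) := by
  have ha1 : glen a = 1 := by simp [glen, hA]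
  have hb1 : glen b = 1 := by simp [glen, hB]
  ext g
  simp only [Set.mem_image, Finset.mem_coe, mem_Wrd, Set.mem_setOf_eq]
  constructor
  · rintro ⟨⟨f, rfl, hlen⟩, hk⟩
    have h3 := glen_mul_le (a*f) b
    have h4 := glen_mul_le a f
    have h2 : glen (a*f) = glen a + glen f := by omega
    have h5 : glen ((a*f)*b) = glen (a*f) + glen b := by omega
    have hw : (a*f*b).toWord = [A] ++ f.toWord ++ [B] := by
      rw [toWord_mul_of_glen h5, toWord_mul_of_glen h2, hA, hB]
    refine ⟨(a*f*b).toWord, ⟨?_, chain'_toWord _, ?_, ?_⟩, FreeGroup.mk_toWord⟩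
    · simpa [glen] using hk
    · rw [hw]; rfl
    · rw [hw, List.getLast?_concat]
  · rintro ⟨w, ⟨hl, hc, hh, hg⟩, rfl⟩
    obtain ⟨hd, w₁, rfl⟩ : ∃ hd t, w = hd :: t := by
      cases w with
      | nil => simp at hl
      | cons h t => exact ⟨h, t, rfl⟩
    obtain rfl : A = hd := by
      have h' : hd = A := by simpa using hh
      exact h'.symm
    have hw₁ : w₁ ≠ [] := by intro h; rw [h] at hl; simp at hl
    obtain ⟨w₂, B', rfl⟩ : ∃ l c, w₁ = l ++ [c] := by
      rcases List.eq_nil_or_concat w₁ with h | ⟨l, c, h⟩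
      · exact absurd h hw₁
      · exact ⟨l, c, by simpa [List.concat_eq_append] using h⟩
    obtain rfl : B = B' := by
      have h6 := hg
      rw [show A :: (w₂ ++ [B']) = (A :: w₂) ++ [B'] from rfl,
        List.getLast?_concat] at h6
      have h' : B' = B := by simpa using h6
      exact h'.symm
    have hc₂ : w₂.Chain' Rel := hc.infix ⟨[A], [B], by simp⟩
    have hred : (FreeGroup.mk (A :: (w₂ ++ [B]))).toWord = A :: (w₂ ++ [B]) :=
      toWord_mk_eq hc
    have hred₂ : (FreeGroup.mk w₂).toWord = w₂ := toWord_mk_eq hc₂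
    have hglen : glen (FreeGroup.mk (A :: (w₂ ++ [B]))) = w₂.length + 2 := by
      simp [glen, hred]
    constructor
    · refine ⟨FreeGroup.mk w₂, ?_, ?_⟩
      · rw [← FreeGroup.mk_toWord (x := a), ← FreeGroup.mk_toWord (x := b), hA, hB,
          FreeGroup.mul_mk, FreeGroup.mul_mk]
        rfl
      · rw [hglen, ha1, hb1, show glen (FreeGroup.mk w₂) = w₂.length from by
          simp [glen, hred₂]]
        omega
    · rw [hglen]
      simp at hl
      omega

lemma cesaro_abel {f : ℕ → ℝ} {L : ℝ} (hf : Tendsto f atTop (𝓝 L)) :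
    Tendsto (fun t => (1 - t) * ∑' k, f k * t ^ k) (nhdsWithin 1 (Set.Iio 1)) (𝓝 L) := by
  set g : ℕ → ℝ := fun k => Nat.casesOn k (f 0) (fun n => f (n+1) - f n) with hgdef
  have hpart : ∀ n, ∑ i ∈ Finset.range (n+1), g i = f n := by
    intro n
    induction n with
    | zero => simp [hgdef]
    | succ n ih => rw [Finset.sum_range_succ, ih]; simp [hgdef]
  have hsum : Tendsto (fun n => ∑ i ∈ Finset.range n, g i) atTop (𝓝 L) := by
    apply (tendsto_add_atTop_iff_nat 1).mp
    simpa [hpart] using hf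
  have habel := Real.tendsto_tsum_powerSeries_nhdsWithin_lt hsum
  obtain ⟨N, hN⟩ : ∃ N, ∀ k ≥ N, |f k| ≤ |L| + 1 := by
    obtain ⟨N, hN⟩ := Metric.tendsto_atTop.mp hf 1 one_pos
    refine ⟨N, fun k hk => ?_⟩
    have h1 : |f k - L| < 1 := by simpa [Real.dist_eq] using hN k hk
    calc |f k| = |(f k - L) + L| := by ring_nf
      _ ≤ |f k - L| + |L| := abs_add_le _ _
      _ ≤ |L| + 1 := by linarith
  refine Filter.Tendsto.congr' ?_ habel
  filter_upwards [Ioo_mem_nhdsLT_of_mem (Set.mem_Ioc.mpr ⟨one_pos, le_refl (1:ℝ)⟩)]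
    with t ht
  obtain ⟨ht0, ht1⟩ := ht
  have hgeo : Summable (fun k : ℕ => t ^ k) := summable_geometric_of_lt_one ht0.le ht1
  have hS : Summable (fun k => f k * t ^ k) := by
    refine summable_of_isBigO_nat hgeo (Asymptotics.isBigO_iff.mpr ⟨|L|+1, ?_⟩)
    filter_upwards [eventually_ge_atTop N] with k hk
    calc ‖f k * t^k‖ = |f k| * ‖t^k‖ := by rw [norm_mul]; rfl
      _ ≤ (|L|+1) * ‖t^k‖ :=
        mul_le_mul_of_nonneg_right (hN k hk) (norm_nonneg _)
  set S := ∑' k, f k * t ^ k with hSdef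
  have hhs : HasSum (fun k => f k * t ^ k) S := hS.hasSum
  have h1 : HasSum (fun n => f n * t ^ (n+1)) (S * t) := by
    have h1' := hhs.mul_right t
    have he : (fun n => f n * t ^ n * t) = fun n => f n * t ^ (n+1) := by
      funext n; rw [pow_succ, mul_assoc]
    rwa [he] at h1'
  set G : ℕ → ℝ := fun k => Nat.casesOn k 0 (fun n => f n * t ^ (n+1)) with hGdef
  have h2 : HasSum G (S * t) := by
    have h3 : HasSum (fun n => G (n + 1)) (S * t) := h1
    have h4 := (hasSum_nat_add_iff 1).mp h3
    simpa [hGdef] using h4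
  have h5 : HasSum (fun k => g k * t ^ k) (S - S * t) := by
    have heq : (fun k => g k * t^k) = fun k => f k * t^k - G k := by
      funext k
      cases k with
      | zero => simp [hgdef, hGdef]
      | succ n => simp [hgdef, hGdef]; ring
    rw [heq]
    exact hhs.sub h2
  rw [h5.tsum_eq]
  ring

end Stmt17

/-- every double-based cone with one-letter handles has Cesaro density
`1/(4m²)`. -/
theorem stmt17 {m : ℕ} (hm : 2 ≤ m) (a b : FG m)
    (ha : glen a = 1) (hb : glen b = 1) :
    Tendsto (fun t => (1 - t) * genFun (dcone a b) t)
      (nhdsWithin 1 (Set.Iio 1)) (nhds (1 / (4 * (m : ℝ) ^ 2))) := by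
  obtain ⟨A, hA⟩ := List.length_eq_one_iff.mp (show a.toWord.length = 1 from ha)
  obtain ⟨B, hB⟩ := List.length_eq_one_iff.mp (show b.toWord.length = 1 from hb)
  have hm1 : 1 ≤ m := by omega
  have hmR : (2:ℝ) ≤ (m:ℝ) := by exact_mod_cast hm
  set q : ℝ := 2*(m:ℝ) - 1 with hq
  have hq1 : 1 < q := by rw [hq]; linarith
  have hq0 : 0 < q := by linarith
  set L : ℝ := 1 / (4 * (m:ℝ)^2) with hL
  have hnk : ∀ j : ℕ, (nk (dcone a b) (j+2) : ℝ)
      = ((Stmt17.Wrd B (j+1) A).card : ℝ) := by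
    intro j
    have hset := Stmt17.dcone_sphere hA hB j
    have hinj : Set.InjOn FreeGroup.mk
        ((Stmt17.Wrd B (j+1) A) : Set (List (Stmt17.Ltr m))) := by
      intro w₁ h₁ w₂ h₂ he
      have hc₁ := ((Stmt17.mem_Wrd B (j+1) A w₁).mp h₁).2.1
      have hc₂ := ((Stmt17.mem_Wrd B (j+1) A w₂).mp h₂).2.1
      rw [← Stmt17.toWord_mk_eq hc₁, ← Stmt17.toWord_mk_eq hc₂, he]
    rw [nk, show {g ∈ dcone a b | glen g = j + 2}
        = {g | g ∈ dcone a b ∧ glen g = j + 2} from rfl, hset,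
      Set.ncard_image_of_injOn hinj, Set.ncard_coe_finset]
  have hfk : Tendsto (fun k => fk (dcone a b) k) atTop (𝓝 L) := by
    rw [← tendsto_sub_nhds_zero_iff]
    apply squeeze_zero_norm' (a := fun k => (q^2 / (4*(m:ℝ)^2)) * (1/q)^k)
    · filter_upwards [eventually_ge_atTop 2] with k hk
      obtain ⟨j, rfl⟩ : ∃ j, k = j + 2 := ⟨k - 2, by omega⟩
      have hdev := Stmt17.dev hm1 B (j+1) A
      have hdevR : |2*(m:ℝ) * ((Stmt17.Wrd B (j+1) A).card : ℝ) - q^(j+1)| ≤ q := by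
        rw [hq]
        exact_mod_cast hdev
      have hfkval : fk (dcone a b) (j+2)
          = ((Stmt17.Wrd B (j+1) A).card : ℝ) / (2*(m:ℝ) * q^(j+1)) := by
        rw [fk, hnk j, sphereCard]
        simp [hq]
      have hm0 : (m:ℝ) ≠ 0 := by positivity
      have hqne : q ≠ 0 := ne_of_gt hq0
      have hpos : (0:ℝ) < 4*(m:ℝ)^2 * q^(j+1) := by positivity
      rw [hfkval, hL,
        show ((Stmt17.Wrd B (j+1) A).card : ℝ) / (2*(m:ℝ) * q^(j+1)) - 1/(4*(m:ℝ)^2)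
          = (2*(m:ℝ) * ((Stmt17.Wrd B (j+1) A).card : ℝ) - q^(j+1)) / (4*(m:ℝ)^2 * q^(j+1))
          from by field_simp; ring]
      rw [Real.norm_eq_abs, abs_div, abs_of_pos hpos]
      calc |2*(m:ℝ) * ((Stmt17.Wrd B (j+1) A).card : ℝ) - q^(j+1)| / (4*(m:ℝ)^2 * q^(j+1))
          ≤ q / (4*(m:ℝ)^2 * q^(j+1)) := by gcongr
        _ = (q^2 / (4*(m:ℝ)^2)) * (1/q)^(j+2) := by
            rw [one_div_pow]
            field_simp
            ring
    · have h0 := (tendsto_pow_atTop_nhds_zero_of_lt_one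
        (by positivity : (0:ℝ) ≤ 1/q) (by rw [div_lt_one hq0]; linarith)).const_mul
        (q^2 / (4*(m:ℝ)^2))
      simpa using h0
  exact Stmt17.cesaro_abel hfk
end
end
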